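/- arXiv:1402.5002 — 4 statements merged into one kernel-verified Lean document; each statement's English description precedes it below -/
import Mathlib

section
/- Let σ₁,…,σ_d (d odd) satisfy the Clifford relations on ℂ^{2^{(d-1)/2}}, normalized so that σ₁⋯σ_d = (-i)^{(d-1)/2}·1. If ρ is a permutation of (1,…,d), then Tr(σ_{ρ₁}⋯σ_{ρ_d}) = (-2i)^{(d-1)/2} (-1)^ρ, where (-1)^ρ is the signature of ρ. If (ρ₁,…,ρ_d) ∈ {1,…,d}^d is not a permutation, the trace vanishes. -/
section aux

variable {ι A : Type*} [Ring A] (σ : ι → A)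

lemma clif_pull (hac : ∀ i j : ι, i ≠ j → σ i * σ j = -(σ j * σ i)) (a : ι) :
    ∀ (l₁ l₂ : List ι), (∀ b ∈ l₁, b ≠ a) →
      ((l₁ ++ a :: l₂).map σ).prod
        = ((-1 : ℤ) ^ l₁.length) • (σ a * ((l₁ ++ l₂).map σ).prod) := by
  intro l₁
  induction l₁ with
  | nil => intro l₂ h; simp
  | cons b t ih =>
    intro l₂ h
    have hb : b ≠ a := h b (by simp)
    have iht := ih l₂ (fun c hc => h c (by simp [hc]))
    simp only [List.cons_append, List.map_cons, List.prod_cons, iht, mul_smul_comm]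
    rw [← mul_assoc, hac b a hb, neg_mul, mul_assoc]
    simp [pow_succ]

lemma clif_swapmid (hac : ∀ i j : ι, i ≠ j → σ i * σ j = -(σ j * σ i))
    (a b : ι) (hab : a ≠ b) (l₁ l₂ l₃ : List ι)
    (ha₁ : ∀ c ∈ l₁, c ≠ a) (hb₁ : ∀ c ∈ l₁, c ≠ b)
    (ha₂ : ∀ c ∈ l₂, c ≠ a) (hb₂ : ∀ c ∈ l₂, c ≠ b) :
    ((l₁ ++ b :: l₂ ++ a :: l₃).map σ).prod
      = - ((l₁ ++ a :: l₂ ++ b :: l₃).map σ).prod := by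
  have h12a : ∀ c ∈ l₁ ++ l₂, c ≠ a := by
    intro c hc; rcases List.mem_append.mp hc with h | h
    · exact ha₁ c h
    · exact ha₂ c h
  have h12b : ∀ c ∈ l₁ ++ l₂, c ≠ b := by
    intro c hc; rcases List.mem_append.mp hc with h | h
    · exact hb₁ c h
    · exact hb₂ c h
  have e1 : l₁ ++ b :: l₂ ++ a :: l₃ = l₁ ++ b :: (l₂ ++ a :: l₃) := by simp
  have e2 : l₁ ++ a :: l₂ ++ b :: l₃ = l₁ ++ a :: (l₂ ++ b :: l₃) := by simp
  have e3 : l₁ ++ (l₂ ++ a :: l₃) = (l₁ ++ l₂) ++ a :: l₃ := by simp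
  have e4 : l₁ ++ (l₂ ++ b :: l₃) = (l₁ ++ l₂) ++ b :: l₃ := by simp
  rw [e1, e2, clif_pull σ hac b l₁ (l₂ ++ a :: l₃) hb₁,
    clif_pull σ hac a l₁ (l₂ ++ b :: l₃) ha₁, e3, e4,
    clif_pull σ hac a (l₁ ++ l₂) l₃ h12a,
    clif_pull σ hac b (l₁ ++ l₂) l₃ h12b]
  rw [mul_smul_comm, mul_smul_comm, ← mul_assoc, ← mul_assoc,
    hac b a (fun h => hab h.symm)]
  simp [smul_smul]

lemma clif_passby (hac : ∀ i j : ι, i ≠ j → σ i * σ j = -(σ j * σ i)) (j : ι) :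
    ∀ l : List ι, (∀ b ∈ l, b ≠ j) →
      σ j * (l.map σ).prod = ((-1 : ℤ) ^ l.length) • ((l.map σ).prod * σ j) := by
  intro l
  induction l with
  | nil => intro h; simp
  | cons b t ih =>
    intro h
    have hb : b ≠ j := h b (by simp)
    have iht := ih (fun c hc => h c (by simp [hc]))
    simp only [List.map_cons, List.prod_cons]
    rw [← mul_assoc, hac j b (fun hh => hb hh.symm), neg_mul, mul_assoc, iht]
    simp [pow_succ, mul_assoc, mul_smul_comm]
    rw [← mul_assoc, ← ((Commute.neg_one_left (σ b)).pow_left t.length).eq, mul_assoc]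

end aux


section permpart
variable {A : Type*} [Ring A] {d : ℕ} (σ : Fin d → A)

lemma clif_swap_ofFn (hac : ∀ i j : Fin d, i ≠ j → σ i * σ j = -(σ j * σ i))
    (f : Fin d → Fin d) (hf : Function.Injective f) (x y : Fin d) (hxy : x ≠ y) :
    ((List.ofFn (f ∘ Equiv.swap x y)).map σ).prod = - ((List.ofFn f).map σ).prod := by
  classical
  have hac' : ∀ i j : Fin d, i ≠ j → (σ ∘ f) i * (σ ∘ f) j = -((σ ∘ f) j * (σ ∘ f) i) :=
    fun i j hij => hac _ _ (fun h => hij (hf h))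
  rw [List.ofFn_eq_map, List.ofFn_eq_map, List.map_map, List.map_map]
  have key : ∀ (u v : Fin d) (L1 L2 L3 : List (Fin d)),
      List.finRange d = L1 ++ u :: L2 ++ v :: L3 →
      ((u = x ∧ v = y) ∨ (u = y ∧ v = x)) →
      ((List.finRange d).map (σ ∘ (f ∘ Equiv.swap x y))).prod
        = -(((List.finRange d).map (σ ∘ f)).prod) := by
    intro u v L1 L2 L3 hdec hu
    have husw : Equiv.swap x y u = v := by
      rcases hu with ⟨rfl, rfl⟩ | ⟨rfl, rfl⟩ <;> simp
    have hvsw : Equiv.swap x y v = u := by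
      rcases hu with ⟨rfl, rfl⟩ | ⟨rfl, rfl⟩ <;> simp
    have nd : (L1 ++ u :: L2 ++ v :: L3).Nodup := hdec ▸ List.nodup_finRange d
    simp only [List.cons_append, List.nodup_append, List.nodup_cons, List.mem_append,
      List.mem_cons, List.disjoint_left, not_or] at nd
    have huv : u ≠ v := nd.2.2 u (Or.inr (Or.inl rfl)) v (Or.inl rfl)
    have h1 : ∀ c ∈ L1, c ≠ u ∧ c ≠ v := fun c hc =>
      ⟨nd.1.2.2 c hc u (Or.inl rfl), nd.2.2 c (Or.inl hc) v (Or.inl rfl)⟩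
    have h2 : ∀ c ∈ L2, c ≠ u ∧ c ≠ v := fun c hc =>
      ⟨fun h => nd.1.2.1.1 (h ▸ hc), nd.2.2 c (Or.inr (Or.inr hc)) v (Or.inl rfl)⟩
    have h3 : ∀ c ∈ L3, c ≠ u ∧ c ≠ v := fun c hc =>
      ⟨fun h => nd.2.2 u (Or.inr (Or.inl rfl)) c (Or.inr hc) h.symm, fun h => nd.2.1.1 (h ▸ hc)⟩
    have hfix : ∀ c, c ≠ u → c ≠ v → Equiv.swap x y c = c := by
      intro c hcu hcv
      rcases hu with ⟨rfl, rfl⟩ | ⟨rfl, rfl⟩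
      · exact Equiv.swap_apply_of_ne_of_ne hcu hcv
      · exact Equiv.swap_apply_of_ne_of_ne hcv hcu
    have m1 : L1.map (σ ∘ (f ∘ Equiv.swap x y)) = L1.map (σ ∘ f) :=
      List.map_congr_left (fun c hc => by
        obtain ⟨h1u, h1v⟩ := h1 c hc
        simp [Function.comp_apply, hfix c h1u h1v])
    have m2 : L2.map (σ ∘ (f ∘ Equiv.swap x y)) = L2.map (σ ∘ f) :=
      List.map_congr_left (fun c hc => by
        obtain ⟨h2u, h2v⟩ := h2 c hc
        simp [Function.comp_apply, hfix c h2u h2v])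
    have m3 : L3.map (σ ∘ (f ∘ Equiv.swap x y)) = L3.map (σ ∘ f) :=
      List.map_congr_left (fun c hc => by
        obtain ⟨h3u, h3v⟩ := h3 c hc
        simp [Function.comp_apply, hfix c h3u h3v])
    have hmap : (L1 ++ u :: L2 ++ v :: L3).map (σ ∘ (f ∘ Equiv.swap x y))
        = (L1 ++ v :: L2 ++ u :: L3).map (σ ∘ f) := by
      simp only [List.map_append, List.map_cons, m1, m2, m3, Function.comp_apply, husw, hvsw]
    rw [hdec, hmap]
    exact clif_swapmid (σ ∘ f) hac' u v huv L1 L2 L3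
      (fun c hc => (h1 c hc).1) (fun c hc => (h1 c hc).2)
      (fun c hc => (h2 c hc).1) (fun c hc => (h2 c hc).2)
  obtain ⟨L1, T, hAT⟩ := List.append_of_mem (List.mem_finRange x)
  have hy : y ∈ L1 ∨ y ∈ T := by
    have hm : y ∈ List.finRange d := List.mem_finRange y
    rw [hAT] at hm
    simp only [List.mem_append, List.mem_cons] at hm
    rcases hm with h | h | h
    · exact Or.inl h
    · exact absurd h hxy.symm
    · exact Or.inr h
  rcases hy with hyA | hyT
  · obtain ⟨L0, B, hB⟩ := List.append_of_mem hyA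
    refine key y x L0 B T ?_ (Or.inr ⟨rfl, rfl⟩)
    rw [hAT, hB]; try simp
  · obtain ⟨B, C, hB⟩ := List.append_of_mem hyT
    refine key x y L1 B C ?_ (Or.inl ⟨rfl, rfl⟩)
    rw [hAT, hB]; try simp

end permpart

section permlemma
variable {A : Type*} [Ring A] {d : ℕ} (σ : Fin d → A)

lemma clif_perm (hac : ∀ i j : Fin d, i ≠ j → σ i * σ j = -(σ j * σ i))
    (ρ : Equiv.Perm (Fin d)) :
    ((List.ofFn ⇑ρ).map σ).prod
      = ((Equiv.Perm.sign ρ : ℤ)) • ((List.ofFn (id : Fin d → Fin d)).map σ).prod := by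
  refine Equiv.Perm.swap_induction_on' ρ ?_ ?_
  · simp
  · intro f x y hxy hf
    have hc : ⇑(f * Equiv.swap x y) = f ∘ Equiv.swap x y := rfl
    rw [hc, clif_swap_ofFn σ hac f f.injective x y hxy, hf]
    simp [Equiv.Perm.sign_swap hxy]

end permlemma

lemma clif_first_split {α : Type*} (a : α) :
    ∀ l : List α, a ∈ l → ∃ s t, l = s ++ a :: t ∧ a ∉ s := by
  intro l
  induction l with
  | nil => intro h; simp at h
  | cons b u ih =>
    intro h
    by_cases hab : a = b
    · exact ⟨[], u, by simp [hab], by simp⟩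
    · have hau : a ∈ u := by
        rcases List.mem_cons.mp h with h' | h'
        · exact absurd h' hab
        · exact h'
      obtain ⟨s, t, hst, has⟩ := ih hau
      exact ⟨b :: s, t, by rw [hst]; simp, by simp [hab, has]⟩

lemma clif_dup_split {α : Type*} :
    ∀ l : List α, ¬ l.Nodup → ∃ (l₁ : List α) (a : α) (l₂ l₃ : List α),
      l = l₁ ++ a :: l₂ ++ a :: l₃ ∧ a ∉ l₂ := by
  intro l
  induction l with
  | nil => intro h; exact absurd List.nodup_nil h
  | cons b u ih =>
    intro h
    by_cases hbu : b ∈ u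
    · obtain ⟨s, t, hst, hbs⟩ := clif_first_split b u hbu
      exact ⟨[], b, s, t, by rw [hst]; simp, hbs⟩
    · have : ¬ u.Nodup := fun hnd => h (List.nodup_cons.mpr ⟨hbu, hnd⟩)
      obtain ⟨l₁, a, l₂, l₃, hsp, ha⟩ := ih this
      exact ⟨b :: l₁, a, l₂, l₃, by rw [hsp]; simp, ha⟩

lemma clif_trace_zero {n d : ℕ} (σ : Fin d → Matrix (Fin n) (Fin n) ℂ)
    (hsq : ∀ i, σ i * σ i = 1)
    (hac : ∀ i j : Fin d, i ≠ j → σ i * σ j = -(σ j * σ i)) :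
    ∀ (k : ℕ) (l : List (Fin d)), l.length ≤ k → Odd l.length → l.length ≤ d →
      (l.length < d ∨ ¬ l.Nodup) → Matrix.trace ((l.map σ).prod) = 0 := by
  intro k
  induction k with
  | zero =>
    intro l hl ho _ _
    rw [Nat.le_zero] at hl
    rw [hl] at ho
    exact absurd ho (by simp)
  | succ k ih =>
    intro l hlen ho hld hcase
    by_cases hnd : l.Nodup
    · have hlt : l.length < d := hcase.resolve_right (fun h => h hnd)
      have hex : ∃ j : Fin d, j ∉ l := by
        by_contra hall
        push_neg at hall
        have h1 : (Finset.univ : Finset (Fin d)) ⊆ l.toFinset :=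
          fun j _ => List.mem_toFinset.mpr (hall j)
        have h2 := Finset.card_le_card h1
        have h3 := List.toFinset_card_le l
        simp only [Finset.card_univ, Fintype.card_fin] at h2
        omega
      obtain ⟨j, hj⟩ := hex
      have hpass := clif_passby σ hac j l (fun b hb h => hj (h ▸ hb))
      have hneg : σ j * (l.map σ).prod = -((l.map σ).prod * σ j) := by
        rw [hpass, Odd.neg_one_pow ho, neg_one_zsmul]
      set X := (l.map σ).prod with hX
      have key : Matrix.trace X = - Matrix.trace X :=
        calc Matrix.trace X = Matrix.trace (X * (σ j * σ j)) := by rw [hsq j, mul_one]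
          _ = Matrix.trace ((X * σ j) * σ j) := by rw [mul_assoc]
          _ = Matrix.trace (σ j * (X * σ j)) := Matrix.trace_mul_comm _ _
          _ = Matrix.trace ((σ j * X) * σ j) := by rw [mul_assoc]
          _ = Matrix.trace ((-(X * σ j)) * σ j) := by rw [hneg]
          _ = - Matrix.trace (X * (σ j * σ j)) := by
              rw [neg_mul, Matrix.trace_neg, mul_assoc]
          _ = - Matrix.trace X := by rw [hsq j, mul_one]
      linear_combination key / 2
    · obtain ⟨l₁, a, l₂, l₃, hsplit, hal₂⟩ := clif_dup_split l hnd
      have hl₂a : ∀ b ∈ l₂, b ≠ a := fun b hb h => hal₂ (h ▸ hb)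
      have hprod : (l.map σ).prod
          = ((-1 : ℤ) ^ l₂.length) • (((l₁ ++ (l₂ ++ l₃)).map σ).prod) := by
        rw [hsplit]
        have e : l₁ ++ a :: l₂ ++ a :: l₃ = l₁ ++ (a :: (l₂ ++ a :: l₃)) := by simp
        have hp := clif_pull σ hac a l₂ l₃ hl₂a
        rw [e, List.map_append, List.prod_append, List.map_cons, List.prod_cons, hp,
          mul_smul_comm, ← mul_assoc, hsq a, one_mul, mul_smul_comm]
        simp [List.map_append, mul_assoc]
      have hll : l.length = l₁.length + l₂.length + l₃.length + 2 := by
        rw [hsplit]; simp; omega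
      have hnewlen : (l₁ ++ (l₂ ++ l₃)).length = l₁.length + l₂.length + l₃.length := by
        simp; omega
      have hodd' : Odd l.length := ho
      rw [Nat.odd_iff] at hodd'
      have hrec := ih (l₁ ++ (l₂ ++ l₃)) (by omega)
        (by rw [Nat.odd_iff]; omega) (by omega) (Or.inl (by omega))
      rw [hprod, Matrix.trace_smul, hrec, smul_zero]

/-- For `σ₁,…,σ_d` (d odd) satisfying the Clifford relations and normalized by
`σ₁⋯σ_d = (-i)^((d-1)/2) · 1`:
(a) for any permutation `ρ` of `(1,…,d)`, `Tr(σ_{ρ₁}⋯σ_{ρ_d}) = (-2i)^((d-1)/2) (-1)^ρ`;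
(b) if `(ρ₁,…,ρ_d)` is not a permutation, the trace vanishes. -/
theorem stmt_6 (d : ℕ) (hd : Odd d)
    (σ : Fin d → Matrix (Fin (2 ^ ((d - 1) / 2))) (Fin (2 ^ ((d - 1) / 2))) ℂ)
    (hsa : ∀ i, (σ i).IsHermitian)
    (hcl : ∀ i j, σ i * σ j + σ j * σ i = if i = j then (2 : ℂ) • 1 else 0)
    (hnorm : (List.ofFn σ).prod = ((-Complex.I) ^ ((d - 1) / 2)) • 1) :
    (∀ ρ : Equiv.Perm (Fin d),
        Matrix.trace (List.ofFn fun i => σ (ρ i)).prod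
          = (-2 * Complex.I) ^ ((d - 1) / 2) * ((Equiv.Perm.sign ρ : ℤ) : ℂ)) ∧
    (∀ ρ : Fin d → Fin d, ¬ Function.Bijective ρ →
        Matrix.trace (List.ofFn fun i => σ (ρ i)).prod = 0) := by
  have hsq : ∀ i, σ i * σ i = 1 := by
    intro i
    have h := hcl i i
    rw [if_pos rfl] at h
    have h2 : (2 : ℂ) • (σ i * σ i) = (2 : ℂ) • (1 : Matrix _ _ ℂ) := by
      rw [two_smul]; exact h
    exact smul_right_injective _ (two_ne_zero) h2
  have hac : ∀ i j : Fin d, i ≠ j → σ i * σ j = -(σ j * σ i) := by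
    intro i j hij
    have h := hcl i j
    rw [if_neg hij] at h
    exact eq_neg_of_add_eq_zero_left h
  constructor
  · intro ρ
    have h1 : (List.ofFn fun i => σ (ρ i)) = (List.ofFn ⇑ρ).map σ := by
      rw [List.map_ofFn]; rfl
    have h2 : ((List.ofFn (id : Fin d → Fin d)).map σ).prod
        = ((-Complex.I) ^ ((d - 1) / 2)) • 1 := by
      rw [List.map_ofFn, Function.comp_id, hnorm]
    rw [h1, clif_perm σ hac ρ, h2, Matrix.trace_smul, Matrix.trace_smul, Matrix.trace_one]
    have hpow : (-2 * Complex.I) ^ ((d - 1) / 2)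
        = (-Complex.I) ^ ((d - 1) / 2) * 2 ^ ((d - 1) / 2) := by
      rw [← mul_pow]; ring_nf
    simp only [zsmul_eq_mul, smul_eq_mul, Fintype.card_fin, hpow]
    push_cast
    ring
  · intro ρ hρ
    have hinj : ¬ Function.Injective ρ := fun h => hρ (Finite.injective_iff_bijective.mp h)
    have h1 : (List.ofFn fun i => σ (ρ i)) = (List.ofFn ρ).map σ := by
      rw [List.map_ofFn]; rfl
    rw [h1]
    apply clif_trace_zero σ hsq hac d
    · simp
    · simpa using hd
    · simp
    · right
      simpa [List.nodup_ofFn] using hinj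
end

section
/- Let σ₁,…,σ_d (d odd) satisfy the Clifford relations on ℂ^{2^{(d-1)/2}} with σ₁⋯σ_d = (-i)^{(d-1)/2}·1. For vectors y₁,…,y_d ∈ ℝ^d, Tr(∏ᵢ (yᵢ·σ)) = (-2i)^{(d-1)/2} Det[y₁,…,y_d], where yᵢ·σ = Σⱼ y_{i,j} σⱼ and Det is the determinant of the matrix with columns y₁,…,y_d. -/
namespace Stmt7

variable {d N : ℕ}

/-- Contraction of a complex vector with the sigma matrices. -/
noncomputable def contr (σ : Fin d → Matrix (Fin N) (Fin N) ℂ) (u : Fin d → ℂ) :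
    Matrix (Fin N) (Fin N) ℂ := ∑ j, u j • σ j

section

variable (σ : Fin d → Matrix (Fin N) (Fin N) ℂ)
variable (hcl : ∀ i j, σ i * σ j + σ j * σ i = if i = j then (2 : ℂ) • 1 else 0)

include hcl

theorem hsq (i : Fin d) : σ i * σ i = 1 := by
  have h := hcl i i
  rw [if_pos rfl] at h
  have h2 : (2 : ℂ) • (σ i * σ i) = (2 : ℂ) • (1 : Matrix (Fin N) (Fin N) ℂ) := by
    rw [two_smul]; exact h
  exact smul_right_injective _ two_ne_zero h2

theorem hanti {i j : Fin d} (h : i ≠ j) : σ i * σ j = -(σ j * σ i) := by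
  have h2 := hcl i j
  rw [if_neg h] at h2
  exact eq_neg_of_add_eq_zero_left h2

theorem sigma_comm (l : Fin d) (w : List (Fin d)) :
    σ l * (w.map σ).prod
      = ((-1 : ℂ) ^ (w.countP (fun a => a ≠ l))) • ((w.map σ).prod * σ l) := by
  induction w with
  | nil => simp
  | cons a w ih =>
    simp only [List.map_cons, List.prod_cons, List.countP_cons]
    rcases eq_or_ne a l with hal | hal
    · have h1 : σ l * σ a = σ a * σ l := by rw [hal]
      have : σ l * (σ a * (w.map σ).prod) = σ a * (σ l * (w.map σ).prod) := by
        rw [← mul_assoc, h1, mul_assoc]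
      rw [this, ih]
      simp [hal, mul_smul_comm, mul_assoc]
    · have h1 : σ l * σ a = -(σ a * σ l) := hanti σ hcl (Ne.symm hal)
      have : σ l * (σ a * (w.map σ).prod) = -(σ a * (σ l * (w.map σ).prod)) := by
        rw [← mul_assoc, h1, neg_mul, mul_assoc]
      rw [this, ih]
      have hd1 : (decide (a ≠ l)) = true := by simp [hal]
      rw [hd1]
      simp only [if_true, pow_succ, mul_smul_comm, mul_assoc]
      rw [← neg_smul]
      ring_nf

theorem trace_word_zero (w : List (Fin d)) (l : Fin d) (hl : l ∉ w)
    (hodd : Odd w.length) : Matrix.trace ((w.map σ).prod) = 0 := by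
  set W := (w.map σ).prod with hW
  have hc : w.countP (fun a => a ≠ l) = w.length := by
    apply List.countP_eq_length.mpr
    intro a ha
    simp only [ne_eq, decide_eq_true_eq]
    rintro rfl; exact hl ha
  have h1 : σ l * W = -(W * σ l) := by
    rw [hW, sigma_comm σ hcl l w, hc, hodd.neg_one_pow, neg_one_smul]
  have h2 : Matrix.trace ((σ l * W) * σ l) = Matrix.trace W := by
    rw [Matrix.trace_mul_comm, ← mul_assoc, hsq σ hcl, one_mul]
  have h3 : (σ l * W) * σ l = -W := by
    rw [h1, neg_mul, mul_assoc, hsq σ hcl, mul_one]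
  rw [h3, Matrix.trace_neg] at h2
  have h4 : Matrix.trace W + Matrix.trace W = 0 := by linear_combination -h2
  exact add_self_eq_zero.mp h4

theorem contr_anticomm (u u' : Fin d → ℂ) :
    contr σ u * contr σ u' + contr σ u' * contr σ u
      = (2 * ∑ j, u j * u' j) • 1 := by
  have expand : ∀ a b : Fin d → ℂ,
      (∑ j, a j • σ j) * (∑ k, b k • σ k) = ∑ j, ∑ k, (a j * b k) • (σ j * σ k) := by
    intro a b
    rw [Finset.sum_mul]
    refine Finset.sum_congr rfl fun j _ => ?_
    rw [Finset.mul_sum]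
    refine Finset.sum_congr rfl fun k _ => ?_
    rw [smul_mul_assoc, mul_smul_comm, smul_smul]
  unfold contr
  rw [expand, expand]
  rw [Finset.sum_comm (f := fun j k => (u' j * u k) • (σ j * σ k))]
  rw [← Finset.sum_add_distrib]
  have : ∀ j : Fin d,
      ((∑ k, (u j * u' k) • (σ j * σ k)) + ∑ k, (u' k * u j) • (σ k * σ j))
        = (u j * u' j) • ((2:ℂ) • (1 : Matrix (Fin N) (Fin N) ℂ)) := by
    intro j
    rw [← Finset.sum_add_distrib]
    have h1 : ∀ k : Fin d, (u j * u' k) • (σ j * σ k) + (u' k * u j) • (σ k * σ j)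
        = (u j * u' k) • (if j = k then (2:ℂ) • (1 : Matrix (Fin N) (Fin N) ℂ) else 0) := by
      intro k
      rw [mul_comm (u' k) (u j), ← smul_add, hcl j k]
    rw [Finset.sum_congr rfl fun k _ => h1 k]
    simp [Finset.sum_ite_eq, smul_ite]
  rw [Finset.sum_congr rfl fun j _ => this j]
  rw [← Finset.sum_smul, smul_smul]
  congr 1
  exact mul_comm _ _

theorem contr_sq (u : Fin d → ℂ) :
    contr σ u * contr σ u = (∑ j, u j * u j) • 1 := by
  have h := contr_anticomm σ hcl u u
  have h2 : (2 : ℂ) • (contr σ u * contr σ u)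
      = (2 : ℂ) • ((∑ j, u j * u j) • (1 : Matrix (Fin N) (Fin N) ℂ)) := by
    rw [two_smul, h, smul_smul]
  exact smul_right_injective _ two_ne_zero h2

theorem trace_mixed : ∀ (L : List (Fin d → ℂ)) (w : List (Fin d)),
    Odd (w.length + L.length) → w.length + L.length < d →
    Matrix.trace ((w.map σ).prod * (L.map (contr σ)).prod) = 0 := by
  intro L
  induction L with
  | nil =>
    intro w h1 h2
    simp only [List.length_nil, Nat.add_zero] at h1 h2
    rw [List.map_nil, List.prod_nil, mul_one]
    have hex : ∃ l : Fin d, l ∉ w := by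
      by_contra hco
      push_neg at hco
      have hsub : (Finset.univ : Finset (Fin d)) ⊆ w.toFinset :=
        fun x _ => List.mem_toFinset.mpr (hco x)
      have hcard := Finset.card_le_card hsub
      rw [Finset.card_univ, Fintype.card_fin] at hcard
      have h3 := w.toFinset_card_le
      omega
    obtain ⟨l, hl⟩ := hex
    exact trace_word_zero σ hcl w l hl h1
  | cons u L ih =>
    intro w h1 h2
    rw [List.map_cons, List.prod_cons]
    have hexp : (w.map σ).prod * (contr σ u * (L.map (contr σ)).prod)
        = ∑ j, u j • (((w ++ [j]).map σ).prod * (L.map (contr σ)).prod) := by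
      unfold contr
      rw [← mul_assoc, Finset.mul_sum, Finset.sum_mul]
      refine Finset.sum_congr rfl fun j _ => ?_
      rw [mul_smul_comm, smul_mul_assoc, List.map_append, List.prod_append]
      simp [mul_assoc]
    rw [hexp, Matrix.trace_sum]
    refine Finset.sum_eq_zero fun j _ => ?_
    rw [Matrix.trace_smul]
    have h1' : Odd ((w ++ [j]).length + L.length) := by
      simp only [List.length_append, List.length_cons, List.length_nil,
        List.length_cons] at h1 ⊢
      rw [Nat.odd_iff] at h1 ⊢
      omega
    have h2' : (w ++ [j]).length + L.length < d := by
      simp only [List.length_append, List.length_cons, List.length_nil,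
        List.length_cons] at h2 ⊢
      omega
    rw [ih (w ++ [j]) h1' h2', smul_zero]

theorem trace_contr_list (M : List (Fin d → ℂ)) (h1 : Odd M.length)
    (h2 : M.length < d) : Matrix.trace ((M.map (contr σ)).prod) = 0 := by
  have h := trace_mixed σ hcl M [] (by simpa) (by simpa)
  simpa using h

omit hcl in
theorem split_prod (v : Fin d → Fin d → ℂ) (i0 i1 : Fin d)
    (hadj : (i1 : ℕ) = (i0 : ℕ) + 1) :
    (List.ofFn fun k => contr σ (v k)).prod =
      ((List.ofFn fun k => contr σ (v k)).take (i0 : ℕ)).prod *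
        (contr σ (v i0) * (contr σ (v i1) *
          ((List.ofFn fun k => contr σ (v k)).drop ((i0 : ℕ) + 2)).prod)) := by
  have hlen : (List.ofFn fun k => contr σ (v k)).length = d := by simp
  have ht : (i0 : ℕ) < (List.ofFn fun k => contr σ (v k)).length := by
    rw [hlen]; exact i0.isLt
  have ht1 : (i0 : ℕ) + 1 < (List.ofFn fun k => contr σ (v k)).length := by
    rw [hlen]; omega
  have h1 := List.drop_eq_getElem_cons ht
  have h2 := List.drop_eq_getElem_cons ht1
  have e0 : (List.ofFn fun k => contr σ (v k))[(i0 : ℕ)]'ht = contr σ (v i0) := by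
    rw [List.getElem_ofFn]
  have e1 : (List.ofFn fun k => contr σ (v k))[(i0 : ℕ) + 1]'ht1 = contr σ (v i1) := by
    rw [List.getElem_ofFn]
    exact congrArg (fun x => contr σ (v x)) (Fin.ext (by simp [hadj]))
  rw [← List.prod_take_mul_prod_drop (List.ofFn fun k => contr σ (v k)) (i0 : ℕ),
    h1, h2, List.prod_cons, List.prod_cons, e0, e1]

theorem trace_take_drop (hd : Odd d) (v : Fin d → Fin d → ℂ) (t : ℕ)
    (h2 : t + 2 ≤ d) :
    Matrix.trace (((List.ofFn fun k => contr σ (v k)).take t).prod *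
      ((List.ofFn fun k => contr σ (v k)).drop (t + 2)).prod) = 0 := by
  have hL : (List.ofFn fun k => contr σ (v k)) = (List.ofFn v).map (contr σ) :=
    (List.map_ofFn (f := v) (g := contr σ)).symm
  rw [hL, ← List.map_take, ← List.map_drop, ← List.prod_append, ← List.map_append]
  apply trace_contr_list σ hcl
  · simp only [List.length_append, List.length_take, List.length_drop,
      List.length_ofFn, min_eq_left (show t ≤ d by omega)]
    rw [Nat.odd_iff] at hd ⊢
    omega
  · simp only [List.length_append, List.length_take, List.length_drop,
      List.length_ofFn, min_eq_left (show t ≤ d by omega)]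
    omega

theorem adj_eq (hd : Odd d) (v : Fin d → Fin d → ℂ) (i0 i1 : Fin d)
    (hadj : (i1 : ℕ) = (i0 : ℕ) + 1) (he : v i0 = v i1) :
    Matrix.trace ((List.ofFn fun k => contr σ (v k)).prod) = 0 := by
  have h2d : (i0 : ℕ) + 2 ≤ d := by have := i1.isLt; omega
  rw [split_prod σ v i0 i1 hadj, ← he, ← mul_assoc (contr σ (v i0)),
    contr_sq σ hcl, smul_mul_assoc, one_mul, mul_smul_comm, Matrix.trace_smul,
    trace_take_drop σ hcl hd v (i0 : ℕ) h2d, smul_zero]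

theorem adj_swap (hd : Odd d) (v w : Fin d → Fin d → ℂ) (i0 i1 : Fin d)
    (hadj : (i1 : ℕ) = (i0 : ℕ) + 1)
    (hw : w = fun k => v (Equiv.swap i0 i1 k)) :
    Matrix.trace ((List.ofFn fun k => contr σ (w k)).prod)
      = - Matrix.trace ((List.ofFn fun k => contr σ (v k)).prod) := by
  have h2d : (i0 : ℕ) + 2 ≤ d := by have := i1.isLt; omega
  have hwk : ∀ k, w k = v (Equiv.swap i0 i1 k) := fun k => by rw [hw]
  have hv0 : w i0 = v i1 := by rw [hwk, Equiv.swap_apply_left]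
  have hv1 : w i1 = v i0 := by rw [hwk, Equiv.swap_apply_right]
  have htake : (List.ofFn fun k => contr σ (w k)).take (i0 : ℕ)
      = (List.ofFn fun k => contr σ (v k)).take (i0 : ℕ) := by
    apply List.ext_getElem (by simp)
    intro n hn1 hn2
    rw [List.getElem_take, List.getElem_take, List.getElem_ofFn, List.getElem_ofFn]
    have hnlt : n < (i0 : ℕ) := by
      simp only [List.length_take, List.length_ofFn] at hn1
      omega
    have : w ⟨n, by omega⟩ = v ⟨n, by omega⟩ := by
      rw [hwk, Equiv.swap_apply_of_ne_of_ne (Fin.ne_of_val_ne (by simp; omega))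
        (Fin.ne_of_val_ne (by simp; omega))]
    exact congrArg (contr σ) this
  have hdrop : (List.ofFn fun k => contr σ (w k)).drop ((i0 : ℕ) + 2)
      = (List.ofFn fun k => contr σ (v k)).drop ((i0 : ℕ) + 2) := by
    apply List.ext_getElem (by simp)
    intro n hn1 hn2
    rw [List.getElem_drop, List.getElem_drop, List.getElem_ofFn, List.getElem_ofFn]
    have : w ⟨(i0 : ℕ) + 2 + n, by
        simp only [List.length_drop, List.length_ofFn] at hn1; omega⟩
        = v ⟨(i0 : ℕ) + 2 + n, by
        simp only [List.length_drop, List.length_ofFn] at hn1; omega⟩ := by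
      rw [hwk, Equiv.swap_apply_of_ne_of_ne (Fin.ne_of_val_ne (by simp; omega))
        (Fin.ne_of_val_ne (by simp; omega))]
    exact congrArg (contr σ) this
  have key : Matrix.trace ((List.ofFn fun k => contr σ (w k)).prod)
      + Matrix.trace ((List.ofFn fun k => contr σ (v k)).prod) = 0 := by
    rw [split_prod σ w i0 i1 hadj, split_prod σ v i0 i1 hadj, htake, hdrop,
      hv0, hv1]
    set P := ((List.ofFn fun k => contr σ (v k)).take (i0 : ℕ)).prod
    set Q := ((List.ofFn fun k => contr σ (v k)).drop ((i0 : ℕ) + 2)).prod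
    set A := contr σ (v i0)
    set B := contr σ (v i1)
    have hcomb : P * (B * (A * Q)) + P * (A * (B * Q))
        = P * ((B * A + A * B) * Q) := by
      rw [add_mul, mul_add, mul_assoc, mul_assoc]
    rw [← Matrix.trace_add, hcomb, add_comm (B * A), contr_anticomm σ hcl,
      smul_mul_assoc, one_mul, mul_smul_comm, Matrix.trace_smul,
      trace_take_drop σ hcl hd v (i0 : ℕ) h2d, smul_zero]
  linear_combination key

theorem alt_aux (hd : Odd d) : ∀ (r : ℕ) (v : Fin d → Fin d → ℂ) (i j : Fin d),
    (j : ℕ) = (i : ℕ) + r + 1 → v i = v j →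
    Matrix.trace ((List.ofFn fun k => contr σ (v k)).prod) = 0 := by
  intro r
  induction r with
  | zero =>
    intro v i j hij he
    exact adj_eq σ hcl hd v i j (by omega) he
  | succ r ih =>
    intro v i j hij he
    have hjlt := j.isLt
    have ht1 : ((i : ℕ) + r + 1) + 1 < d := by omega
    set i0 : Fin d := ⟨(i : ℕ) + r + 1, by omega⟩ with hi0
    have hadj : (j : ℕ) = (i0 : ℕ) + 1 := by simp only [hi0]; omega
    set v' : Fin d → Fin d → ℂ := fun k => v (Equiv.swap i0 j k) with hv'
    have h1 : v' i = v i := by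
      rw [hv']
      show v (Equiv.swap i0 j i) = v i
      rw [Equiv.swap_apply_of_ne_of_ne (Fin.ne_of_val_ne (by simp only [hi0]; omega))
        (Fin.ne_of_val_ne (by omega))]
    have h2 : v' i0 = v i := by
      rw [hv']
      show v (Equiv.swap i0 j i0) = v i
      rw [Equiv.swap_apply_left, ← he]
    have h0 : Matrix.trace ((List.ofFn fun k => contr σ (v' k)).prod) = 0 :=
      ih v' i i0 (by simp only [hi0]) (h1.trans h2.symm)
    have h3 := adj_swap σ hcl hd v v' i0 j hadj hv'
    rw [h0] at h3
    exact (neg_eq_zero.mp h3.symm)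

theorem alt_full (hd : Odd d) (v : Fin d → Fin d → ℂ) (i j : Fin d)
    (he : v i = v j) (hne : i ≠ j) :
    Matrix.trace ((List.ofFn fun k => contr σ (v k)).prod) = 0 := by
  have hvalne : (i : ℕ) ≠ (j : ℕ) := fun h => hne (Fin.ext h)
  rcases Nat.lt_or_ge (i : ℕ) (j : ℕ) with h | h
  · exact alt_aux σ hcl hd ((j : ℕ) - (i : ℕ) - 1) v i j (by omega) he
  · exact alt_aux σ hcl hd ((i : ℕ) - (j : ℕ) - 1) v j i (by omega) he.symm

end

end Stmt7

/-- For `σ₁,…,σ_d` (d odd) satisfying the Clifford relations with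
`σ₁⋯σ_d = (-i)^((d-1)/2) · 1`, and vectors `y₁,…,y_d ∈ ℝ^d`,
`Tr(∏ᵢ (yᵢ·σ)) = (-2i)^((d-1)/2) Det[y₁,…,y_d]`, where `yᵢ·σ = Σⱼ y_{i,j} σⱼ` and `Det` is
the determinant of the matrix with columns `y₁,…,y_d`. -/
theorem stmt_7 (d : ℕ) (hd : Odd d)
    (σ : Fin d → Matrix (Fin (2 ^ ((d - 1) / 2))) (Fin (2 ^ ((d - 1) / 2))) ℂ)
    (hsa : ∀ i, (σ i).IsHermitian)
    (hcl : ∀ i j, σ i * σ j + σ j * σ i = if i = j then (2 : ℂ) • 1 else 0)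
    (hnorm : (List.ofFn σ).prod = ((-Complex.I) ^ ((d - 1) / 2)) • 1)
    (y : Fin d → Fin d → ℝ) :
    Matrix.trace (List.ofFn fun i => ∑ j, ((y i j : ℂ) • σ j)).prod
      = (-2 * Complex.I) ^ ((d - 1) / 2) *
        ((Matrix.det (Matrix.of fun k i => y i k) : ℝ) : ℂ) := by
  classical
  let cmap : (Fin d → ℂ) →ₗ[ℂ] Matrix (Fin (2 ^ ((d - 1) / 2))) (Fin (2 ^ ((d - 1) / 2))) ℂ :=
    { toFun := Stmt7.contr σ
      map_add' := fun u v => by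
        simp [Stmt7.contr, add_smul, Finset.sum_add_distrib]
      map_smul' := fun c u => by
        simp [Stmt7.contr, smul_smul, Finset.smul_sum] }
  let F : MultilinearMap ℂ (fun _ : Fin d => Fin d → ℂ) ℂ :=
    (Matrix.traceLinearMap (Fin (2 ^ ((d - 1) / 2))) ℂ ℂ).compMultilinearMap
      ((MultilinearMap.mkPiAlgebraFin ℂ d _).compLinearMap fun _ => cmap)
  have hF : ∀ v : Fin d → Fin d → ℂ,
      F v = Matrix.trace ((List.ofFn fun k => Stmt7.contr σ (v k)).prod) := by
    intro v
    simp [F, cmap, MultilinearMap.mkPiAlgebraFin_apply]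
    rfl
  let G : (Fin d → ℂ) [⋀^Fin d]→ₗ[ℂ] ℂ :=
    { toMultilinearMap := F
      map_eq_zero_of_eq' := fun v i j he hne =>
        (hF v).trans (Stmt7.alt_full σ hcl hd v i j he hne) }
  have hGdet := G.eq_smul_basis_det (Pi.basisFun ℂ (Fin d))
  set vv : Fin d → Fin d → ℂ := fun i j => (y i j : ℂ) with hvv
  have happ : G vv = G (Pi.basisFun ℂ (Fin d))
      * (Pi.basisFun ℂ (Fin d)).det vv := by
    conv_lhs => rw [hGdet]
    simp [smul_eq_mul]
  -- value on the standard basis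
  have hGb : G (Pi.basisFun ℂ (Fin d))
      = (-Complex.I) ^ ((d - 1) / 2) * (2 : ℂ) ^ ((d - 1) / 2) := by
    have hc : ∀ k : Fin d, Stmt7.contr σ ((Pi.basisFun ℂ (Fin d)) k) = σ k := by
      intro k
      rw [Pi.basisFun_apply]
      unfold Stmt7.contr
      rw [Finset.sum_eq_single k]
      · simp
      · intro b _ hbk
        rw [Pi.single_eq_of_ne hbk, zero_smul]
      · simp
    have h1 : G (Pi.basisFun ℂ (Fin d))
        = Matrix.trace ((List.ofFn fun k =>
            Stmt7.contr σ ((Pi.basisFun ℂ (Fin d)) k)).prod) := hF _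
    rw [h1, show (fun k => Stmt7.contr σ ((Pi.basisFun ℂ (Fin d)) k)) = σ from funext hc,
      hnorm, Matrix.trace_smul, Matrix.trace_one, smul_eq_mul, Fintype.card_fin]
    push_cast
    ring
  -- the determinant term
  have hdet : (Pi.basisFun ℂ (Fin d)).det vv
      = ((Matrix.det (Matrix.of fun k i => y i k) : ℝ) : ℂ) := by
    rw [Module.Basis.det_apply]
    have h2 : (Pi.basisFun ℂ (Fin d)).toMatrix vv
        = Complex.ofRealHom.mapMatrix (Matrix.of fun k i => y i k) := by
      ext a b
      rw [Module.Basis.toMatrix_apply, Pi.basisFun_repr]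
      simp [vv, RingHom.mapMatrix_apply, Matrix.map_apply]
    rw [h2, ← RingHom.map_det]
    rfl
  -- put everything together
  have hLHS : Matrix.trace (List.ofFn fun i => ∑ j, ((y i j : ℂ) • σ j)).prod
      = G vv := (hF vv).symm
  rw [hLHS, happ, hGb, hdet]
  have hpow : (-2 * Complex.I) ^ ((d - 1) / 2)
      = (-Complex.I) ^ ((d - 1) / 2) * (2 : ℂ) ^ ((d - 1) / 2) := by
    rw [← mul_pow]
    ring_nf
  rw [hpow]
end

section
/- Let σ₁,…,σ_d (d odd) satisfy the Clifford relations with σ₁⋯σ_d = (-i)^{(d-1)/2}·1. For y₀ = 0, y₁,…,y_d ∈ ℝ^d, Tr(∏_{i=1}^d (yᵢ·σ)) = (-2i)^{(d-1)/2} d! · Vol[0, y₁,…,y_d], where Vol denotes the oriented volume of the simplex with vertices 0, y₁,…,y_d. -/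
open Matrix

namespace Stmt8Aux

variable {d N : ℕ}

/-- Contraction of a vector with the family `σ`, as a linear map. -/
noncomputable def cmap (σ : Fin d → Matrix (Fin N) (Fin N) ℂ) :
    (Fin d → ℂ) →ₗ[ℂ] Matrix (Fin N) (Fin N) ℂ :=
  ∑ j, (LinearMap.proj j).smulRight (σ j)

lemma cmap_apply (σ : Fin d → Matrix (Fin N) (Fin N) ℂ) (w : Fin d → ℂ) :
    cmap σ w = ∑ j, w j • σ j := by
  simp [cmap]


lemma list_decomp {α : Type*} (L : List α) {i j : ℕ} (hij : i < j) (hj : j < L.length) :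
    ∃ A M B : List α, L = A ++ L[i] :: (M ++ L[j] :: B) := by
  have hi : i < L.length := lt_trans hij hj
  refine ⟨L.take i, (L.drop (i + 1)).take (j - i - 1), L.drop (j + 1), ?_⟩
  conv_lhs => rw [← List.take_append_drop i L, List.drop_eq_getElem_cons hi]
  congr 2
  conv_lhs => rw [← List.take_append_drop (j - i - 1) (L.drop (i + 1))]
  congr 1
  rw [List.drop_drop]
  have h : i + 1 + (j - i - 1) = j := by omega
  rw [h, List.drop_eq_getElem_cons hj]

section Clifford

variable (σ : Fin d → Matrix (Fin N) (Fin N) ℂ)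
variable (hcl : ∀ i j, σ i * σ j + σ j * σ i = if i = j then (2 : ℂ) • 1 else 0)

include hcl

lemma hsq (i : Fin d) : σ i * σ i = 1 := by
  have h := hcl i i
  simp only [if_pos rfl] at h
  have h2 : (2 : ℂ) • (σ i * σ i) = (2 : ℂ) • (1 : Matrix (Fin N) (Fin N) ℂ) := by
    rw [two_smul]; exact h
  exact smul_right_injective _ (two_ne_zero) h2

lemma hanti {i j : Fin d} (hij : i ≠ j) : σ i * σ j = -(σ j * σ i) := by
  have h := hcl i j
  rw [if_neg hij] at h
  linear_combination (norm := noncomm_ring) h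

lemma conj_prod (j : Fin d) :
    ∀ t : List (Fin d), j ∉ t →
      σ j * (t.map σ).prod * σ j = ((-1 : ℂ) ^ t.length) • (t.map σ).prod := by
  intro t
  induction t with
  | nil => intro _; simp [hsq σ hcl j]
  | cons i t ih =>
    intro h
    rw [List.mem_cons] at h
    push_neg at h
    have h1 : σ j * σ i = -(σ i * σ j) := hanti σ hcl h.1
    have h2 := ih h.2
    calc σ j * ((i :: t).map σ).prod * σ j
        = (σ j * σ i) * ((t.map σ).prod * σ j) := by
          simp [List.map_cons, List.prod_cons, mul_assoc]
      _ = -(σ i * (σ j * (t.map σ).prod * σ j)) := by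
          rw [h1]; noncomm_ring
      _ = -(σ i * (((-1 : ℂ) ^ t.length) • (t.map σ).prod)) := by rw [h2]
      _ = ((-1 : ℂ) ^ (i :: t).length) • ((i :: t).map σ).prod := by
          simp only [List.length_cons, List.map_cons, List.prod_cons, pow_succ, mul_smul_comm]
          rw [mul_comm ((-1 : ℂ) ^ t.length), mul_smul, neg_one_smul]

lemma trace_sigma_prod_zero (t : List (Fin d)) (hodd : Odd t.length)
    (hlt : t.length < d) : Matrix.trace ((t.map σ).prod) = 0 := by
  obtain ⟨j, hj⟩ : ∃ j : Fin d, j ∉ t := by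
    by_contra h
    push_neg at h
    have h1 : (Finset.univ : Finset (Fin d)).card ≤ t.toFinset.card :=
      Finset.card_le_card fun x _ => List.mem_toFinset.2 (h x)
    have h2 := t.toFinset_card_le
    simp only [Finset.card_univ, Fintype.card_fin] at h1
    omega
  set P := (t.map σ).prod with hP
  have e1 : σ j * P * σ j = -P := by
    rw [conj_prod σ hcl j t hj, hodd.neg_one_pow, neg_one_smul]
  have e2 : Matrix.trace (σ j * P * σ j) = Matrix.trace P := by
    rw [Matrix.trace_mul_cycle, hsq σ hcl j, one_mul]
  rw [e1, Matrix.trace_neg] at e2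
  linear_combination -e2 / 2

lemma trace_phi_zero_gen :
    ∀ (L : List (Fin d → ℂ)) (t : List (Fin d)), Odd (t.length + L.length) →
      t.length + L.length < d →
      Matrix.trace ((t.map σ).prod * (L.map (cmap σ)).prod) = 0 := by
  intro L
  induction L with
  | nil =>
    intro t hodd hlt
    simp only [List.map_nil, List.prod_nil, mul_one]
    exact trace_sigma_prod_zero σ hcl t (by simpa using hodd) (by simpa using hlt)
  | cons w L ih =>
    intro t hodd hlt
    have key : (t.map σ).prod * ((w :: L).map (cmap σ)).prod
        = ∑ j, w j • (((t ++ [j]).map σ).prod * (L.map (cmap σ)).prod) := by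
      rw [List.map_cons, List.prod_cons, cmap_apply]
      rw [Finset.sum_mul]
      rw [Finset.mul_sum]
      refine Finset.sum_congr rfl fun j _ => ?_
      rw [smul_mul_assoc, mul_smul_comm]
      congr 1
      rw [List.map_append, List.prod_append]
      simp [mul_assoc]
    rw [key, Matrix.trace_sum]
    refine Finset.sum_eq_zero fun j _ => ?_
    rw [Matrix.trace_smul]
    have hlen : (t ++ [j]).length + L.length = t.length + (w :: L).length := by
      simp; omega
    rw [ih (t ++ [j]) (by rw [hlen]; exact hodd) (by rw [hlen]; exact hlt)]
    simp

lemma trace_phi_zero (L : List (Fin d → ℂ)) (hodd : Odd L.length) (hlt : L.length < d) :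
    Matrix.trace ((L.map (cmap σ)).prod) = 0 := by
  have := trace_phi_zero_gen σ hcl L [] (by simpa using hodd) (by simpa using hlt)
  simpa using this

lemma cmap_mul_add (u w : Fin d → ℂ) :
    cmap σ u * cmap σ w + cmap σ w * cmap σ u = (2 * ∑ j, u j * w j) • 1 := by
  rw [cmap_apply, cmap_apply, Finset.sum_mul_sum, Finset.sum_mul_sum]
  simp only [smul_mul_smul_comm]
  have e2 : (∑ j, ∑ k, (w j * u k) • (σ j * σ k)) = ∑ j, ∑ k, (w k * u j) • (σ k * σ j) :=
    Finset.sum_comm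
  rw [e2, ← Finset.sum_add_distrib]
  have : ∀ j ∈ Finset.univ, (∑ k, ((u j * w k) • (σ j * σ k)) + ∑ k, ((w k * u j) • (σ k * σ j)))
      = (2 * (u j * w j)) • (1 : Matrix (Fin N) (Fin N) ℂ) := by
    intro j _
    rw [← Finset.sum_add_distrib]
    have h2 : ∀ k ∈ Finset.univ, ((u j * w k) • (σ j * σ k)) + ((w k * u j) • (σ k * σ j))
        = if j = k then (2 * (u j * w j)) • (1 : Matrix (Fin N) (Fin N) ℂ) else 0 := by
      intro k _
      rw [mul_comm (w k) (u j), ← smul_add, hcl j k]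
      split_ifs with h
      · subst h; rw [smul_smul, mul_comm]
      · rw [smul_zero]
    rw [Finset.sum_congr rfl h2, Finset.sum_ite_eq]
    simp
  rw [Finset.sum_congr rfl this, ← Finset.sum_smul, Finset.mul_sum]

lemma cmap_sq (w : Fin d → ℂ) :
    cmap σ w * cmap σ w = (∑ j, w j * w j) • 1 := by
  have h := cmap_mul_add σ hcl w w
  have h2 : (2 : ℂ) • (cmap σ w * cmap σ w)
      = (2 : ℂ) • ((∑ j, w j * w j) • (1 : Matrix (Fin N) (Fin N) ℂ)) := by
    rw [two_smul, smul_smul]; exact h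
  exact smul_right_injective _ (two_ne_zero) h2

lemma cmap_swap (u w : Fin d → ℂ) :
    cmap σ u * cmap σ w = (2 * ∑ j, u j * w j) • 1 - cmap σ w * cmap σ u :=
  eq_sub_of_add_eq (cmap_mul_add σ hcl u w)

variable (hd : Odd d)
include hd

lemma trace_swap (A B : List (Fin d → ℂ)) (u w : Fin d → ℂ)
    (hlen : (A ++ u :: w :: B).length = d) :
    Matrix.trace (((A ++ u :: w :: B).map (cmap σ)).prod)
      = -Matrix.trace (((A ++ w :: u :: B).map (cmap σ)).prod) := by
  have hAB : Odd (A ++ B).length ∧ (A ++ B).length < d := by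
    simp only [List.length_append, List.length_cons] at hlen ⊢
    rw [Nat.odd_iff] at hd ⊢
    omega
  have hz : Matrix.trace (((A ++ B).map (cmap σ)).prod) = 0 :=
    trace_phi_zero σ hcl _ hAB.1 hAB.2
  have expand : ∀ (x y : Fin d → ℂ),
      ((A ++ x :: y :: B).map (cmap σ)).prod
        = (A.map (cmap σ)).prod * (cmap σ x * cmap σ y * (B.map (cmap σ)).prod) := by
    intro x y
    rw [List.map_append, List.prod_append, List.map_cons, List.prod_cons, List.map_cons,
      List.prod_cons, mul_assoc]
  rw [expand, expand, cmap_swap σ hcl u w, sub_mul, mul_sub, smul_mul_assoc, one_mul,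
    mul_smul_comm, Matrix.trace_sub, Matrix.trace_smul]
  have : (A.map (cmap σ)).prod * (B.map (cmap σ)).prod = ((A ++ B).map (cmap σ)).prod := by
    rw [List.map_append, List.prod_append]
  rw [this, hz]
  simp

lemma trace_dup :
    ∀ (M A B : List (Fin d → ℂ)) (w : Fin d → ℂ),
      (A ++ w :: (M ++ w :: B)).length = d →
      Matrix.trace (((A ++ w :: (M ++ w :: B)).map (cmap σ)).prod) = 0 := by
  intro M
  induction M with
  | nil =>
    intro A B w hlen
    have hAB : Odd (A ++ B).length ∧ (A ++ B).length < d := by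
      simp only [List.length_append, List.length_cons, List.nil_append] at hlen ⊢
      rw [Nat.odd_iff] at hd ⊢
      omega
    have hz : Matrix.trace (((A ++ B).map (cmap σ)).prod) = 0 :=
      trace_phi_zero σ hcl _ hAB.1 hAB.2
    rw [List.nil_append]
    rw [List.map_append, List.prod_append, List.map_cons, List.prod_cons, List.map_cons,
      List.prod_cons, ← mul_assoc (cmap σ w), cmap_sq σ hcl w]
    rw [smul_mul_assoc, one_mul, mul_smul_comm, Matrix.trace_smul]
    rw [← List.prod_append, ← List.map_append, hz]
    simp
  | cons u M ih =>
    intro A B w hlen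
    have e1 : A ++ w :: ((u :: M) ++ w :: B) = A ++ w :: u :: (M ++ w :: B) := by simp
    have e2 : A ++ u :: w :: (M ++ w :: B) = (A ++ [u]) ++ w :: (M ++ w :: B) := by simp
    rw [e1, trace_swap σ hcl hd A (M ++ w :: B) w u (by rw [← e1]; exact hlen), e2,
      ih (A ++ [u]) B w
        (by simp only [List.length_append, List.length_cons, List.length_nil] at hlen ⊢; omega)]
    simp

end Clifford

end Stmt8Aux

/-- The oriented volume of the simplex `[y₀, y₁, …, y_d]` in `ℝ^d`:
`(1/d!)` times the determinant of the matrix with columns `yᵢ - y₀`. -/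
noncomputable def orientedSimplexVol (d : ℕ) (y₀ : Fin d → ℝ) (y : Fin d → Fin d → ℝ) : ℝ :=
  ((d.factorial : ℝ))⁻¹ * Matrix.det (Matrix.of fun k i => y i k - y₀ k)

/-- For `σ₁,…,σ_d` (d odd) satisfying the Clifford relations with
`σ₁⋯σ_d = (-i)^((d-1)/2) · 1`, and `y₀ = 0, y₁,…,y_d ∈ ℝ^d`,
`Tr(∏_{i=1}^d (yᵢ·σ)) = (-2i)^((d-1)/2) d! · Vol[0, y₁,…,y_d]`. -/
theorem stmt_8 (d : ℕ) (hd : Odd d)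
    (σ : Fin d → Matrix (Fin (2 ^ ((d - 1) / 2))) (Fin (2 ^ ((d - 1) / 2))) ℂ)
    (hsa : ∀ i, (σ i).IsHermitian)
    (hcl : ∀ i j, σ i * σ j + σ j * σ i = if i = j then (2 : ℂ) • 1 else 0)
    (hnorm : (List.ofFn σ).prod = ((-Complex.I) ^ ((d - 1) / 2)) • 1)
    (y : Fin d → Fin d → ℝ) :
    Matrix.trace (List.ofFn fun i => ∑ j, ((y i j : ℂ) • σ j)).prod
      = (-2 * Complex.I) ^ ((d - 1) / 2) * (d.factorial : ℂ) *
        ((orientedSimplexVol d 0 y : ℝ) : ℂ) := by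
  classical
  -- the multilinear map
  set Gm : MultilinearMap ℂ (fun _ : Fin d => (Fin d → ℂ)) ℂ :=
    (Matrix.traceLinearMap (Fin (2 ^ ((d - 1) / 2))) ℂ ℂ).compMultilinearMap
      ((MultilinearMap.mkPiAlgebraFin ℂ d _).compLinearMap fun _ => Stmt8Aux.cmap σ)
    with hGm
  have hGm_apply : ∀ v : Fin d → (Fin d → ℂ),
      Gm v = Matrix.trace (((List.ofFn v).map (Stmt8Aux.cmap σ)).prod) := by
    intro v
    rw [hGm]
    rw [LinearMap.compMultilinearMap_apply, MultilinearMap.compLinearMap_apply,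
      MultilinearMap.mkPiAlgebraFin_apply, List.map_ofFn]
    rfl
  have hdup : ∀ (v : Fin d → (Fin d → ℂ)) (i j : Fin d), (i : ℕ) < (j : ℕ) → v i = v j →
      Gm v = 0 := by
    intro v i j hij hv
    have hj : (j : ℕ) < (List.ofFn v).length := by simpa using j.isLt
    obtain ⟨A, M, B, hL⟩ := Stmt8Aux.list_decomp (List.ofFn v) hij hj
    have hvi : (List.ofFn v)[(i : ℕ)] = v i := by simp
    have hvj : (List.ofFn v)[(j : ℕ)] = v i := by simp [← hv]
    rw [hvi, hvj] at hL
    have hlen : (A ++ v i :: (M ++ v i :: B)).length = d := by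
      rw [← hL]; simp
    rw [hGm_apply, hL]
    exact Stmt8Aux.trace_dup σ hcl hd M A B (v i) hlen
  set G : (Fin d → ℂ) [⋀^Fin d]→ₗ[ℂ] ℂ :=
    { toMultilinearMap := Gm
      map_eq_zero_of_eq' := by
        intro v i j hv hij
        rcases Ne.lt_or_gt (Fin.val_ne_iff.mpr hij) with h | h
        · exact hdup v i j h hv
        · exact hdup v j i h hv.symm } with hG
  set e : Module.Basis (Fin d) ℂ (Fin d → ℂ) := Pi.basisFun ℂ (Fin d) with he
  -- value of G on the standard basis
  have hbasis : G (⇑e) = (-Complex.I) ^ ((d - 1) / 2) * (2 : ℂ) ^ ((d - 1) / 2) := by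
    have h1 : (fun i => Stmt8Aux.cmap σ (e i)) = σ := by
      funext i
      rw [he, Pi.basisFun_apply, Stmt8Aux.cmap_apply]
      simp [Pi.single_apply, ite_smul]
    have h2 : G (⇑e) = Matrix.trace (((List.ofFn ⇑e).map (Stmt8Aux.cmap σ)).prod) := hGm_apply _
    rw [h2, List.map_ofFn]
    have h3 : (Stmt8Aux.cmap σ) ∘ ⇑e = σ := h1
    rw [h3, hnorm, Matrix.trace_smul, Matrix.trace_one]
    simp [Fintype.card_fin]
  -- the complexified vectors
  set vc : Fin d → (Fin d → ℂ) := fun i j => (y i j : ℂ) with hvc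
  have hGvc : G vc = G (⇑e) * Matrix.det (Matrix.of vc) := by
    have h := congrFun (congrArg DFunLike.coe (G.eq_smul_basis_det e)) vc
    rw [h]
    rw [AlternatingMap.smul_apply, smul_eq_mul]
    congr 1
    rw [he, Pi.basisFun_det]
    rfl
  have hLHS : Matrix.trace (List.ofFn fun i => ∑ j, ((y i j : ℂ) • σ j)).prod = G vc := by
    have : (List.ofFn fun i => ∑ j, ((y i j : ℂ) • σ j))
        = (List.ofFn vc).map (Stmt8Aux.cmap σ) := by
      rw [List.map_ofFn]
      congr 1
      funext i
      rw [Function.comp_apply, Stmt8Aux.cmap_apply]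
    rw [this]
    exact (hGm_apply vc).symm
  -- the determinant relation
  have hdet : ((orientedSimplexVol d 0 y : ℝ) : ℂ)
      = ((d.factorial : ℂ))⁻¹ * Matrix.det (Matrix.of vc) := by
    rw [orientedSimplexVol]
    push_cast
    congr 1
    have h1 : ((Matrix.det (Matrix.of fun k i => y i k - (0 : Fin d → ℝ) k) : ℝ) : ℂ)
        = Matrix.det ((Matrix.of fun k i => y i k - (0 : Fin d → ℝ) k).map Complex.ofRealHom) := by
      rw [← Complex.ofRealHom_eq_coe, RingHom.map_det]
      rfl
    rw [h1]
    have h2 : (Matrix.of fun k i => y i k - (0 : Fin d → ℝ) k).map Complex.ofRealHom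
        = (Matrix.of vc)ᵀ := by
      ext k i
      simp [hvc, Matrix.map_apply]
    rw [h2, Matrix.det_transpose]
  rw [hLHS, hGvc, hbasis, hdet]
  have hfac : (d.factorial : ℂ) ≠ 0 := Nat.cast_ne_zero.mpr d.factorial_ne_zero
  have hpow : (-2 * Complex.I) ^ ((d - 1) / 2)
      = (-Complex.I) ^ ((d - 1) / 2) * (2 : ℂ) ^ ((d - 1) / 2) := by
    rw [show (-2 * Complex.I) = (-Complex.I) * 2 by ring, mul_pow]
  rw [hpow]
  field_simp
end

section
/- Let x ∈ ℝ^d and let 𝔖 = [x₁,…,x_{d+1}] be a nondegenerate simplex in ℝ^d with x_{d+1} = 0. For each j, let 𝔅ⱼ(x) be the sector of the unit ball centered at x cut out by the facet of 𝔖 opposite to xⱼ (the solid-angle sector subtended at x by the points (xᵢ - x)/|xᵢ - x|, i ≠ j, with orientation inherited from 𝔖). Then Σ_{j=1}^{d+1} Vol(𝔅ⱼ(x)) equals Vol(unit ball) if x lies in the interior of 𝔖 and equals 0 if x lies in the exterior of 𝔖. -/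
open MeasureTheory

/-- Oriented volume of the simplex with vertices `u 0, …, u d` in `ℝ^d`:
`(1/d!)` times the determinant of the matrix with columns `u i - u 0`, `i = 1,…,d`. -/
noncomputable def oVol {d : ℕ} (u : Fin (d + 1) → EuclideanSpace ℝ (Fin d)) : ℝ :=
  ((d.factorial : ℝ))⁻¹ * Matrix.det (Matrix.of fun k (i : Fin d) => (u i.succ - u 0) k)

/-- The sector `𝔅ⱼ(x)` of the unit ball centered at `x` cut out by the facet of the simplex
with vertices `v` opposite to the vertex `v j`: all points of the closed unit ball around `x`
lying on rays from `x` through the facet. -/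
def sector {d : ℕ} (x : EuclideanSpace ℝ (Fin d)) (v : Fin (d + 1) → EuclideanSpace ℝ (Fin d))
    (j : Fin (d + 1)) : Set (EuclideanSpace ℝ (Fin d)) :=
  {p | p ∈ Metric.closedBall x 1 ∧
    ∃ q ∈ convexHull ℝ (v '' {i | i ≠ j}), ∃ t : ℝ, 0 ≤ t ∧ p = x + t • (q - x)}

/-- The oriented volume of the sector `𝔅ⱼ(x)`: its Lebesgue measure, signed by the
orientation of the simplex `𝔖ⱼ(x)` with vertices `x + (vᵢ-x)/|vᵢ-x|` (`i ≠ j`) and `x` at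
the `j`-th spot (orientation inherited from the simplex). -/
noncomputable def sectorOrientedVol {d : ℕ} (x : EuclideanSpace ℝ (Fin d))
    (v : Fin (d + 1) → EuclideanSpace ℝ (Fin d)) (j : Fin (d + 1)) : ℝ :=
  Real.sign (oVol (Function.update (fun i => x + ‖v i - x‖⁻¹ • (v i - x)) j x)) *
    (volume (sector x v j)).toReal


/-- determinant with explicit rows -/
noncomputable def rdet {d : ℕ} (r : Fin d → (Fin d → ℝ)) : ℝ := Matrix.det (Matrix.of r)

lemma oVol_eq_rdet {d : ℕ} (u : Fin (d + 1) → EuclideanSpace ℝ (Fin d)) :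
    oVol u = ((d.factorial : ℝ))⁻¹ * rdet (fun i k => (u i.succ - u 0) k) := by
  rw [oVol, ← Matrix.det_transpose]
  rfl

lemma rdet_update_add {d : ℕ} (a : Fin d → (Fin d → ℝ)) (i : Fin d) (y z : Fin d → ℝ) :
    rdet (Function.update a i (y + z)) = rdet (Function.update a i y) + rdet (Function.update a i z) := by
  have h : ∀ w : Fin d → ℝ, Matrix.of (Function.update a i w) = (Matrix.of a).updateRow i w := by
    intro w; rfl
  simp only [rdet, h]
  exact Matrix.det_updateRow_add _ i y z

lemma rdet_update_smul {d : ℕ} (a : Fin d → (Fin d → ℝ)) (i : Fin d) (c : ℝ) (y : Fin d → ℝ) :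
    rdet (Function.update a i (c • y)) = c * rdet (Function.update a i y) := by
  have h : ∀ w : Fin d → ℝ, Matrix.of (Function.update a i w) = (Matrix.of a).updateRow i w := by
    intro w; rfl
  simp only [rdet, h]
  exact Matrix.det_updateRow_smul _ i c y

lemma rdet_add_const {d : ℕ} (a : Fin d → (Fin d → ℝ)) (y : Fin d → ℝ) :
    rdet (fun i => a i + y) = rdet a + ∑ i, rdet (Function.update a i y) := by
  classical
  have h0 : (fun i => a i + y) = (fun _ => y) + a := by
    funext i; exact add_comm _ _
  have h1 : rdet ((fun _ => y) + a) =
      ∑ s : Finset (Fin d), rdet (s.piecewise (fun _ => y) a) := by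
    exact (Matrix.detRowAlternating (R := ℝ) (n := Fin d)).toMultilinearMap.map_add_univ
      (fun _ => y) a
  rw [h0, h1]
  have hz : ∀ s : Finset (Fin d), 2 ≤ s.card → rdet (s.piecewise (fun _ => y) a) = 0 := by
    intro s hs
    obtain ⟨i, hi, j, hj, hij⟩ := Finset.one_lt_card.mp hs
    exact Matrix.det_zero_of_row_eq hij (by
      show Finset.piecewise s (fun _ => y) a i = Finset.piecewise s (fun _ => y) a j
      simp [Finset.piecewise_eq_of_mem _ _ _ hi, Finset.piecewise_eq_of_mem _ _ _ hj])
  have hsub : ∑ s : Finset (Fin d), rdet (s.piecewise (fun _ => y) a)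
      = ∑ s ∈ insert (∅ : Finset (Fin d)) (Finset.univ.image fun i => ({i} : Finset (Fin d))),
          rdet (s.piecewise (fun _ => y) a) := by
    refine (Finset.sum_subset (Finset.subset_univ _) ?_).symm
    intro s _ hs
    apply hz
    rcases Nat.lt_or_ge s.card 2 with h | h
    · interval_cases h' : s.card
      · exact absurd (Finset.card_eq_zero.mp h' ▸ Finset.mem_insert_self _ _) hs
      · obtain ⟨i, rfl⟩ := Finset.card_eq_one.mp h'
        exact absurd (Finset.mem_insert_of_mem (Finset.mem_image_of_mem _ (Finset.mem_univ i))) hs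
    · exact h
  rw [hsub, Finset.sum_insert (by simp), Finset.sum_image
    (fun i _ j _ h => by simpa using congrArg (fun s : Finset (Fin d) => i ∈ s) h)]
  congr 1
  exact Finset.sum_congr rfl fun i _ => by rw [Finset.piecewise_singleton]

noncomputable def rdetUpdL {d : ℕ} (a : Fin d → Fin d → ℝ) (m : Fin d) :
    EuclideanSpace ℝ (Fin d) →ₗ[ℝ] ℝ where
  toFun y := rdet (Function.update a m (fun k => y k))
  map_add' y z := by
    dsimp only
    have h : (fun k => (y + z) k) = (fun k => y k) + (fun k => z k) := rfl
    rw [h, rdet_update_add]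
  map_smul' c y := by
    dsimp only
    have h : (fun k => (c • y) k) = c • (fun k => y k) := rfl
    rw [h, rdet_update_smul]; rfl

lemma oVol_update_affine {d : ℕ} (u : Fin (d+1) → EuclideanSpace ℝ (Fin d)) (j : Fin (d+1)) :
    ∃ (L : EuclideanSpace ℝ (Fin d) →ₗ[ℝ] ℝ) (c : ℝ),
      ∀ y, oVol (Function.update u j y) = L y + c := by
  rcases eq_or_ne j 0 with rfl | hj
  · set a : Fin d → Fin d → ℝ := fun m k => u m.succ k with ha
    refine ⟨-(((d.factorial : ℝ))⁻¹ • (∑ m, rdetUpdL a m)), ((d.factorial : ℝ))⁻¹ * rdet a, ?_⟩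
    intro y
    rw [oVol_eq_rdet]
    have hrow : (fun m k => (Function.update u 0 y m.succ - Function.update u 0 y 0) k)
        = fun m => a m + (fun k => (-y) k) := by
      funext m k
      simp only [Function.update_of_ne (Fin.succ_ne_zero m), Function.update_self, ha]
      show (u m.succ - y) k = u m.succ k + (-y) k
      simp [sub_eq_add_neg]
    rw [hrow, rdet_add_const]
    have hterm : ∀ m, rdet (Function.update a m (fun k => (-y) k))
        = -(rdetUpdL a m y) := by
      intro m
      have h2 : (fun k => (-y) k) = (-1 : ℝ) • (fun k => y k) := by
        funext k; show -(y k) = -1 * (y k); ring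
      rw [h2, rdet_update_smul]
      simp [rdetUpdL, rdet]
    simp only [hterm]
    simp only [LinearMap.neg_apply, LinearMap.smul_apply, LinearMap.sum_apply, smul_eq_mul]
    have h3 : ∑ m, -(rdetUpdL a m y) = -∑ m, rdetUpdL a m y := by
      simp
    rw [h3, Finset.mul_sum]
    ring_nf
    rw [Finset.mul_sum]
  · set m₀ : Fin d := j.pred hj with hm₀
    set a : Fin d → Fin d → ℝ := fun m k => (u m.succ - u 0) k with ha
    refine ⟨((d.factorial : ℝ))⁻¹ • rdetUpdL a m₀,
      ((d.factorial : ℝ))⁻¹ * (-(rdetUpdL a m₀ (u 0))), ?_⟩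
    intro y
    rw [oVol_eq_rdet]
    have hrow : (fun m k => (Function.update u j y m.succ - Function.update u j y 0) k)
        = Function.update a m₀ (fun k => (y - u 0) k) := by
      funext m k
      rcases eq_or_ne m m₀ with rfl | hm
      · rw [Function.update_self]
        have hsucc : m₀.succ = j := Fin.succ_pred j hj
        rw [hsucc, Function.update_self, Function.update_of_ne (Ne.symm hj)]
      · have hsucc : m.succ ≠ j := by
          rw [← Fin.succ_pred j hj]
          exact fun h => hm (Fin.succ_injective d h)
        rw [Function.update_of_ne hm, Function.update_of_ne hsucc,
          Function.update_of_ne (Ne.symm hj), ha]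
    rw [hrow]
    have hsplit : (fun k => (y - u 0) k) = (fun k => y k) + (fun k => (-(u 0)) k) := by
      funext k; show (y - u 0) k = y k + (-(u 0)) k
      simp [sub_eq_add_neg]
    rw [hsplit, rdet_update_add]
    have h2 : (fun k => (-(u 0)) k) = (-1 : ℝ) • (fun k => (u 0) k) := by
      funext k; show -(u 0 k) = -1 * (u 0 k); ring
    rw [h2, rdet_update_smul]
    simp only [LinearMap.smul_apply, smul_eq_mul, rdetUpdL, LinearMap.coe_mk, AddHom.coe_mk]
    ring

lemma oVol_eq_zero_of_eq {d : ℕ} (u : Fin (d+1) → EuclideanSpace ℝ (Fin d))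
    {i j : Fin (d+1)} (hij : i ≠ j) (h : u i = u j) : oVol u = 0 := by
  rw [oVol_eq_rdet]
  rcases eq_or_ne i 0 with rfl | hi
  · have hm : (j.pred hij.symm).succ = j := Fin.succ_pred j hij.symm
    have : rdet (fun m k => (u m.succ - u 0) k) = 0 := by
      apply Matrix.det_eq_zero_of_row_eq_zero (j.pred hij.symm)
      intro k
      show (u (j.pred hij.symm).succ - u 0) k = 0
      rw [hm, ← h, sub_self]; rfl
    rw [this, mul_zero]
  · rcases eq_or_ne j 0 with rfl | hj0
    · have hm : (i.pred hi).succ = i := Fin.succ_pred i hi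
      have : rdet (fun m k => (u m.succ - u 0) k) = 0 := by
        apply Matrix.det_eq_zero_of_row_eq_zero (i.pred hi)
        intro k
        show (u (i.pred hi).succ - u 0) k = 0
        rw [hm, h, sub_self]; rfl
      rw [this, mul_zero]
    · have hmm : (i.pred hi) ≠ (j.pred hj0) := by
        intro hcon
        apply hij
        rw [← Fin.succ_pred i hi, ← Fin.succ_pred j hj0, hcon]
      have : rdet (fun m k => (u m.succ - u 0) k) = 0 := by
        apply Matrix.det_zero_of_row_eq hmm
        show (fun k => (u (i.pred hi).succ - u 0) k) = (fun k => (u (j.pred hj0).succ - u 0) k)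
        rw [Fin.succ_pred, Fin.succ_pred, h]
      rw [this, mul_zero]

lemma oVol_update_comb {d : ℕ} (u p : Fin (d+1) → EuclideanSpace ℝ (Fin d)) (j : Fin (d+1))
    (w : Fin (d+1) → ℝ) (hw : ∑ i, w i = 1) :
    oVol (Function.update u j (∑ i, w i • p i)) = ∑ i, w i * oVol (Function.update u j (p i)) := by
  obtain ⟨L, c, hL⟩ := oVol_update_affine u j
  rw [hL]
  have : L (∑ i, w i • p i) = ∑ i, w i * L (p i) := by
    rw [map_sum]
    exact Finset.sum_congr rfl fun i _ => by rw [L.map_smul]; rfl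
  rw [this]
  have hc : c = ∑ i, w i * c := by rw [← Finset.sum_mul, hw, one_mul]
  conv_lhs => rw [hc]
  rw [← Finset.sum_add_distrib]
  exact Finset.sum_congr rfl fun i _ => by rw [hL]; ring

lemma oVol_update_basis {d : ℕ} (b : AffineBasis (Fin (d+1)) ℝ (EuclideanSpace ℝ (Fin d)))
    (j : Fin (d+1)) (x : EuclideanSpace ℝ (Fin d)) :
    oVol (Function.update (⇑b) j x) = b.coord j x * oVol ⇑b := by
  have hx : (∑ i, b.coord i x • b i) = x := by
    conv_rhs => rw [← b.affineCombination_coord_eq_self x]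
    exact (Finset.univ.affineCombination_eq_linear_combination _ _
      (b.sum_coord_apply_eq_one x)).symm
  have hcomb := oVol_update_comb (⇑b) (⇑b) j (fun i => b.coord i x)
    (b.sum_coord_apply_eq_one x)
  rw [hx] at hcomb
  rw [hcomb, Finset.sum_eq_single j]
  · rw [Function.update_eq_self]
  · intro i _ hij
    have : oVol (Function.update (⇑b) j (b i)) = 0 := by
      apply oVol_eq_zero_of_eq _ hij
      rw [Function.update_of_ne hij, Function.update_self]
    rw [this, mul_zero]
  · intro h; exact absurd (Finset.mem_univ j) h

lemma oVol_update_scale {d : ℕ} (u : Fin (d+1) → EuclideanSpace ℝ (Fin d))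
    {i j : Fin (d+1)} (hij : i ≠ j) (x : EuclideanSpace ℝ (Fin d)) (hj : u j = x)
    (c : ℝ) (z : EuclideanSpace ℝ (Fin d)) :
    oVol (Function.update u i (x + c • (z - x))) = c * oVol (Function.update u i z) := by
  obtain ⟨L, e, hL⟩ := oVol_update_affine u i
  have h0 : oVol (Function.update u i x) = 0 := by
    apply oVol_eq_zero_of_eq _ hij
    rw [Function.update_self, Function.update_of_ne (Ne.symm hij), hj]
  rw [hL] at h0
  have h1 : L (x + c • (z - x)) + e = c * (L z + e) := by
    rw [map_add, L.map_smul, map_sub, smul_eq_mul]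
    have hx : L x = -e := by linarith
    rw [hx]; ring
  rw [hL, h1, ← hL]

lemma oVol_norm_update {d : ℕ} (v : Fin (d+1) → EuclideanSpace ℝ (Fin d))
    (x : EuclideanSpace ℝ (Fin d)) (j : Fin (d+1)) (hx : ∀ i, v i ≠ x) :
    ∃ C : ℝ, 0 < C ∧
      oVol (Function.update (fun i => x + ‖v i - x‖⁻¹ • (v i - x)) j x)
        = C * oVol (Function.update v j x) := by
  classical
  have haux : ∀ s : Finset (Fin (d+1)), j ∉ s →
      oVol (Function.update (fun i => if i ∈ s then x + ‖v i - x‖⁻¹ • (v i - x) else v i) j x)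
        = (∏ i ∈ s, ‖v i - x‖⁻¹) * oVol (Function.update v j x) := by
    intro s
    induction s using Finset.induction_on with
    | empty =>
      intro _
      simp only [Finset.notMem_empty, if_false, Finset.prod_empty, one_mul]
    | insert _ _ hi =>
      rename_i i s ih
      intro hjs
      have hji : j ≠ i := fun h => hjs (h ▸ Finset.mem_insert_self i s)
      have hjs' : j ∉ s := fun h => hjs (Finset.mem_insert_of_mem h)
      have heq : Function.update
            (fun m => if m ∈ insert i s then x + ‖v m - x‖⁻¹ • (v m - x) else v m) j x
          = Function.update
              (Function.update (fun m => if m ∈ s then x + ‖v m - x‖⁻¹ • (v m - x) else v m) j x)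
              i (x + ‖v i - x‖⁻¹ • (v i - x)) := by
        funext m
        rcases eq_or_ne m i with rfl | hmi
        · rw [Function.update_of_ne (Ne.symm hji), Function.update_self,
            if_pos (Finset.mem_insert_self m s)]
        · rw [Function.update_of_ne hmi]
          rcases eq_or_ne m j with rfl | hmj
          · rw [Function.update_self, Function.update_self]
          · rw [Function.update_of_ne hmj, Function.update_of_ne hmj]
            have : m ∈ insert i s ↔ m ∈ s := by
              rw [Finset.mem_insert]
              exact ⟨fun h => h.resolve_left hmi, Or.inr⟩
            simp only [this]
      rw [heq, oVol_update_scale _ (Ne.symm hji) x (Function.update_self _ _ _) _ (v i)]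
      have hvi : Function.update
          (Function.update (fun m => if m ∈ s then x + ‖v m - x‖⁻¹ • (v m - x) else v m) j x)
          i (v i)
          = Function.update (fun m => if m ∈ s then x + ‖v m - x‖⁻¹ • (v m - x) else v m) j x := by
        have : (Function.update (fun m => if m ∈ s then x + ‖v m - x‖⁻¹ • (v m - x) else v m) j x) i
            = v i := by
          rw [Function.update_of_ne (Ne.symm hji), if_neg hi]
        conv_lhs => rw [← this]
        exact Function.update_eq_self _ _
      rw [hvi, ih hjs', Finset.prod_insert hi]
      ring
  refine ⟨∏ i ∈ Finset.univ.erase j, ‖v i - x‖⁻¹, ?_, ?_⟩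
  · apply Finset.prod_pos
    intro i _
    rw [inv_pos, norm_pos_iff]
    exact sub_ne_zero.mpr (hx i)
  · rw [← haux (Finset.univ.erase j) (Finset.notMem_erase j _)]
    congr 1
    funext m
    rcases eq_or_ne m j with rfl | hmj
    · rw [Function.update_self, Function.update_self]
    · rw [Function.update_of_ne hmj, Function.update_of_ne hmj,
        if_pos (Finset.mem_erase.mpr ⟨hmj, Finset.mem_univ m⟩)]

lemma oVol_ne_zero {d : ℕ} (v : Fin (d+1) → EuclideanSpace ℝ (Fin d))
    (hv : AffineIndependent ℝ v) : oVol v ≠ 0 := by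
  have hli : LinearIndependent ℝ (fun i : Fin d => v i.succ - v 0) := by
    have h := (affineIndependent_iff_linearIndependent_vsub ℝ v 0).mp hv
    have hinj : Function.Injective
        (fun i : Fin d => (⟨i.succ, Fin.succ_ne_zero i⟩ : {x : Fin (d+1) // x ≠ 0})) := by
      intro a b hab
      exact Fin.succ_injective d (congrArg Subtype.val hab)
    have := h.comp _ hinj
    simpa [vsub_eq_sub, Function.comp_def] using this
  rw [oVol]
  apply mul_ne_zero
  · simp [Nat.factorial_ne_zero]
  · intro hdet
    obtain ⟨g, hg, hmul⟩ := (Matrix.exists_mulVec_eq_zero_iff).mpr hdet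
    apply hg
    have hsum : ∑ i, g i • (v i.succ - v 0) = 0 := by
      ext k
      have hk := congrFun hmul k
      simp only [Matrix.mulVec, dotProduct, Matrix.of_apply, Pi.zero_apply] at hk
      simp only [WithLp.ofLp_sum, WithLp.ofLp_smul, WithLp.ofLp_zero, Finset.sum_apply,
        Pi.smul_apply, smul_eq_mul, Pi.zero_apply]
      rw [← hk]
      exact Finset.sum_congr rfl fun i _ => by ring
    funext i
    exact Fintype.linearIndependent_iff.mp hli g hsum i


variable {d : ℕ}

lemma facet_mem (b : AffineBasis (Fin (d+1)) ℝ (EuclideanSpace ℝ (Fin d))) (j : Fin (d+1))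
    (q : EuclideanSpace ℝ (Fin d)) :
    q ∈ convexHull ℝ (⇑b '' {i | i ≠ j}) ↔ b.coord j q = 0 ∧ ∀ i, 0 ≤ b.coord i q := by
  classical
  constructor
  · intro hq
    have hsub : ⇑b '' {i | i ≠ j} ⊆ {q | b.coord j q = 0 ∧ ∀ i, 0 ≤ b.coord i q} := by
      rintro _ ⟨i, hi, rfl⟩
      constructor
      · rw [b.coord_apply]
        simp [Ne.symm hi]
      · intro m
        rw [b.coord_apply]
        split <;> norm_num
    have hconv : Convex ℝ {q | b.coord j q = 0 ∧ ∀ i, 0 ≤ b.coord i q} := by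
      have h1 : Convex ℝ {q | b.coord j q = 0} := by
        have := (convex_singleton (0:ℝ)).affine_preimage (b.coord j)
        exact this
      have h2 : Convex ℝ {q | ∀ i, 0 ≤ b.coord i q} := by
        have : {q : EuclideanSpace ℝ (Fin d) | ∀ i, 0 ≤ b.coord i q}
            = ⋂ i, (b.coord i) ⁻¹' (Set.Ici 0) := by
          ext q; simp [Set.mem_iInter]
        rw [this]
        exact convex_iInter fun i => (convex_Ici (0:ℝ)).affine_preimage _
      exact h1.inter h2
    exact convexHull_min hsub hconv hq
  · rintro ⟨hj, hpos⟩
    set w : Fin (d+1) → ℝ := fun i => b.coord i q with hw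
    have hsum : ∑ i ∈ Finset.univ.erase j, w i = 1 := by
      rw [Finset.sum_erase _ (by rw [hw]; exact hj)]
      exact b.sum_coord_apply_eq_one q
    have hq : q = ∑ i ∈ Finset.univ.erase j, w i • b i := by
      rw [Finset.sum_erase _ (by rw [hw]; simp [hj])]
      conv_lhs => rw [← b.affineCombination_coord_eq_self q]
      exact Finset.univ.affineCombination_eq_linear_combination _ _
        (b.sum_coord_apply_eq_one q)
    have hcm : (Finset.univ.erase j).centerMass w ⇑b ∈ convexHull ℝ (⇑b '' {i | i ≠ j}) := by
      apply Finset.centerMass_mem_convexHull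
      · intro i _; exact hpos i
      · rw [hsum]; norm_num
      · intro i hi
        exact ⟨i, Finset.mem_erase.mp hi |>.1, rfl⟩
    have hcmq : (Finset.univ.erase j).centerMass w ⇑b = q := by
      rw [Finset.centerMass_eq_of_sum_1 _ _ hsum, ← hq]
    rwa [hcmq] at hcm

lemma coord_line (b : AffineBasis (Fin (d+1)) ℝ (EuclideanSpace ℝ (Fin d))) (i : Fin (d+1))
    (x u : EuclideanSpace ℝ (Fin d)) (t : ℝ) :
    b.coord i (x + t • u) = b.coord i x + t * (b.coord i).linear u := by
  have h : x + t • u = (t • u) +ᵥ x := by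
    rw [vadd_eq_add, add_comm]
  rw [h, AffineMap.map_vadd, (b.coord i).linear.map_smul]
  simp [vadd_eq_add, add_comm, smul_eq_mul]

lemma coord_linear_ne_zero (hd : 0 < d)
    (b : AffineBasis (Fin (d+1)) ℝ (EuclideanSpace ℝ (Fin d))) (i : Fin (d+1)) :
    (b.coord i).linear ≠ 0 := by
  haveI : Nontrivial (Fin (d+1)) := by
    apply Fin.nontrivial_iff_two_le.mpr; omega
  obtain ⟨j, hj⟩ := exists_ne i
  intro h
  have h1 : b.coord i (b i) = 1 := by rw [b.coord_apply]; simp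
  have h2 : b.coord i (b j) = 0 := by rw [b.coord_apply]; simp [Ne.symm hj]
  have h3 : b.coord i (b i) = b.coord i (b j) := by
    have : b i = (b i - b j) +ᵥ (b j) := by
      rw [vadd_eq_add]; abel
    rw [this, AffineMap.map_vadd, h]
    simp
  rw [h1, h2] at h3
  exact one_ne_zero h3

lemma coord_linear_sub (b : AffineBasis (Fin (d+1)) ℝ (EuclideanSpace ℝ (Fin d)))
    (p : Fin (d+1)) (y z : EuclideanSpace ℝ (Fin d)) :
    (b.coord p).linear (y - z) = b.coord p y - b.coord p z := by
  have h : y = (y - z) +ᵥ z := by rw [vadd_eq_add]; abel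
  conv_rhs => rw [h]
  rw [AffineMap.map_vadd]
  simp

lemma pair_functional_ne_zero
    (b : AffineBasis (Fin (d+1)) ℝ (EuclideanSpace ℝ (Fin d))) {i j : Fin (d+1)}
    (hij : i ≠ j) {Bi Bj : ℝ} (hB : Bi ≠ 0 ∨ Bj ≠ 0)
    (hBsum : (∀ m : Fin (d+1), m = i ∨ m = j) → Bi + Bj = 1) :
    Bi • (b.coord j).linear - Bj • (b.coord i).linear ≠ 0 := by
  classical
  intro h
  have happ : ∀ w, Bi * (b.coord j).linear w - Bj * (b.coord i).linear w = 0 := by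
    intro w
    have := congrArg (fun F : EuclideanSpace ℝ (Fin d) →ₗ[ℝ] ℝ => F w) h
    simpa [LinearMap.sub_apply, LinearMap.smul_apply, smul_eq_mul] using this
  have hcoord : ∀ p q : Fin (d+1), b.coord p (b q) = if p = q then 1 else 0 :=
    fun p q => b.coord_apply p q
  have h1 : Bi + Bj = 0 := by
    have := happ (b j - b i)
    rw [coord_linear_sub, coord_linear_sub, hcoord, hcoord, hcoord, hcoord] at this
    simp [hij, Ne.symm hij] at this
    linarith
  by_cases hm : ∃ m, m ≠ i ∧ m ≠ j
  · obtain ⟨m, hmi, hmj⟩ := hm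
    have h2 : Bi = 0 := by
      have := happ (b j - b m)
      rw [coord_linear_sub, coord_linear_sub, hcoord, hcoord, hcoord, hcoord] at this
      simp [Ne.symm hmj, Ne.symm hmi, hij] at this
      linarith
    have h3 : Bj = 0 := by
      have := happ (b i - b m)
      rw [coord_linear_sub, coord_linear_sub, hcoord, hcoord, hcoord, hcoord] at this
      simp [Ne.symm hmj, Ne.symm hmi, Ne.symm hij] at this
      linarith
    rcases hB with hB | hB
    · exact hB h2
    · exact hB h3
  · push_neg at hm
    have := hBsum (fun m => by
      rcases eq_or_ne m i with rfl | hmi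
      · exact Or.inl rfl
      · exact Or.inr (hm m hmi))
    linarith

open Classical in
lemma core_interior {n : ℕ} (hn : 2 ≤ n) (B C : Fin n → ℝ) (hB : ∑ i, B i = 1)
    (hC : ∑ i, C i = 0) (hC0 : ∀ i, C i ≠ 0)
    (hgen : ∀ i j, i ≠ j → (B i ≠ 0 ∨ B j ≠ 0) → B i * C j ≠ B j * C i)
    (hpos : ∀ i, 0 < B i) :
    ∑ j, Real.sign (B j) *
      (if (∃ t : ℝ, 0 ≤ t ∧ B j + t * C j = 0 ∧ ∀ i, 0 ≤ B i + t * C i) then (1:ℝ) else 0)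
      = 1 := by
  have hne : (Finset.univ : Finset (Fin n)).Nonempty := by
    have h0 : 0 < n := by omega
    exact ⟨⟨0, h0⟩, Finset.mem_univ _⟩
  have hM : (Finset.univ.filter (fun i => C i < 0)).Nonempty := by
    by_contra h
    rw [Finset.not_nonempty_iff_eq_empty] at h
    have hposC : ∀ i ∈ Finset.univ, 0 < C i := by
      intro i _
      rcases (hC0 i).lt_or_gt with hlt | hlt
      · exact absurd (Finset.mem_filter.mpr ⟨Finset.mem_univ i, hlt⟩)
          (Finset.eq_empty_iff_forall_notMem.mp h i)
      · exact hlt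
    have hcon := Finset.sum_pos hposC hne
    rw [hC] at hcon; exact lt_irrefl 0 hcon
  obtain ⟨j₀, hj₀mem, hj₀min⟩ := Finset.exists_min_image _ (fun i => -B i / C i) hM
  have hCj₀ : C j₀ < 0 := (Finset.mem_filter.mp hj₀mem).2
  set β := -B j₀ / C j₀ with hβ
  have hβC : β * C j₀ = -B j₀ := by rw [hβ, div_mul_cancel₀ _ (ne_of_lt hCj₀)]
  have hβpos : 0 < β := by
    rw [hβ]
    apply div_pos_of_neg_of_neg _ hCj₀
    linarith [hpos j₀]
  have hhitj₀ : ∃ t : ℝ, 0 ≤ t ∧ B j₀ + t * C j₀ = 0 ∧ ∀ i, 0 ≤ B i + t * C i := by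
    refine ⟨β, hβpos.le, by linarith, ?_⟩
    intro i
    rcases (hC0 i).lt_or_gt with hlt | hlt
    · have h6 := hj₀min i (Finset.mem_filter.mpr ⟨Finset.mem_univ i, hlt⟩)
      rw [le_div_iff_of_neg hlt] at h6
      linarith
    · nlinarith [hpos i]
  have hhit : ∀ j, (∃ t : ℝ, 0 ≤ t ∧ B j + t * C j = 0 ∧ ∀ i, 0 ≤ B i + t * C i) ↔ j = j₀ := by
    intro j
    constructor
    · rintro ⟨t, ht0, htj, hall⟩
      have hCj : C j < 0 := by
        rcases (hC0 j).lt_or_gt with hlt | hlt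
        · exact hlt
        · nlinarith [hpos j]
      have htval : t = -B j / C j := by rw [eq_div_iff (ne_of_lt hCj)]; linarith
      have h1 : t ≤ β := by
        have h7 := hall j₀
        rw [hβ, le_div_iff_of_neg hCj₀]
        linarith
      have h2 : β ≤ t := by
        rw [htval]
        exact hj₀min j (Finset.mem_filter.mpr ⟨Finset.mem_univ j, hCj⟩)
      have hteq : t = β := le_antisymm h1 h2
      by_contra hne'
      apply hgen j j₀ hne' (Or.inl (hpos j).ne')
      have e1 : B j = -t * C j := by linarith
      have e2 : B j₀ = -β * C j₀ := by linarith
      rw [e1, e2, hteq]; ring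
    · rintro rfl
      exact hhitj₀
  rw [Finset.sum_eq_single j₀]
  · rw [if_pos ((hhit j₀).mpr rfl), Real.sign_of_pos (hpos j₀), one_mul]
  · intro j _ hj
    rw [if_neg (fun h => hj ((hhit j).mp h)), mul_zero]
  · intro h; exact absurd (Finset.mem_univ j₀) h

open Classical in
lemma core_exterior {n : ℕ} (hn : 2 ≤ n) (B C : Fin n → ℝ) (hB : ∑ i, B i = 1)
    (hC : ∑ i, C i = 0) (hC0 : ∀ i, C i ≠ 0)
    (hgen : ∀ i j, i ≠ j → (B i ≠ 0 ∨ B j ≠ 0) → B i * C j ≠ B j * C i)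
    (hneg : ∃ k, B k < 0) :
    ∑ j, Real.sign (B j) *
      (if (∃ t : ℝ, 0 ≤ t ∧ B j + t * C j = 0 ∧ ∀ i, 0 ≤ B i + t * C i) then (1:ℝ) else 0)
      = 0 := by
  obtain ⟨k, hk⟩ := hneg
  set hit : Fin n → Prop :=
    fun j => ∃ t : ℝ, 0 ≤ t ∧ B j + t * C j = 0 ∧ ∀ i, 0 ≤ B i + t * C i with hhit
  by_cases hex : ∃ j, hit j
  · obtain ⟨j₁, t₁, ht₁0, ht₁j, ht₁all⟩ := hex
    have hne : (Finset.univ : Finset (Fin n)).Nonempty := ⟨k, Finset.mem_univ _⟩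
    have hP : (Finset.univ.filter (fun i => 0 < C i)).Nonempty := by
      by_contra h
      rw [Finset.not_nonempty_iff_eq_empty] at h
      have hnegC : ∀ i ∈ Finset.univ, C i < 0 := fun i _ => by
        rcases (hC0 i).lt_or_gt with hlt | hlt
        · exact hlt
        · exact absurd (Finset.mem_filter.mpr ⟨Finset.mem_univ i, hlt⟩)
            (Finset.eq_empty_iff_forall_notMem.mp h i)
      have hcon := Finset.sum_neg hnegC hne
      rw [hC] at hcon; exact lt_irrefl 0 hcon
    have hM : (Finset.univ.filter (fun i => C i < 0)).Nonempty := by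
      by_contra h
      rw [Finset.not_nonempty_iff_eq_empty] at h
      have hposC : ∀ i ∈ Finset.univ, 0 < C i := fun i _ => by
        rcases (hC0 i).lt_or_gt with hlt | hlt
        · exact absurd (Finset.mem_filter.mpr ⟨Finset.mem_univ i, hlt⟩)
            (Finset.eq_empty_iff_forall_notMem.mp h i)
        · exact hlt
      have hcon := Finset.sum_pos hposC hne
      rw [hC] at hcon; exact lt_irrefl 0 hcon
    obtain ⟨ja, hjamem, hjamax⟩ := Finset.exists_max_image _ (fun i => -B i / C i) hP
    obtain ⟨jb, hjbmem, hjbmin⟩ := Finset.exists_min_image _ (fun i => -B i / C i) hM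
    have hCja : 0 < C ja := (Finset.mem_filter.mp hjamem).2
    have hCjb : C jb < 0 := (Finset.mem_filter.mp hjbmem).2
    set α := -B ja / C ja with hα
    set β := -B jb / C jb with hβ
    have hαC : α * C ja = -B ja := by rw [hα, div_mul_cancel₀ _ (ne_of_gt hCja)]
    have hβC : β * C jb = -B jb := by rw [hβ, div_mul_cancel₀ _ (ne_of_lt hCjb)]
    have hbound : ∀ t : ℝ, (∀ i, 0 ≤ B i + t * C i) → α ≤ t ∧ t ≤ β := by
      intro t hall
      constructor
      · have h1 := hall ja
        rw [hα, div_le_iff₀ hCja]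
        linarith
      · have h1 := hall jb
        rw [hβ, le_div_iff_of_neg hCjb]
        linarith
    have hαβ : α ≤ β := le_trans (hbound t₁ ht₁all).1 (hbound t₁ ht₁all).2
    have hα0 : 0 < α := by
      by_contra h
      push_neg at h
      have hβ0 : 0 ≤ β := le_trans ht₁0 (hbound t₁ ht₁all).2
      have hBk : 0 ≤ B k := by
        rcases (hC0 k).lt_or_gt with hlt | hlt
        · have h6 := hjbmin k (Finset.mem_filter.mpr ⟨Finset.mem_univ k, hlt⟩)
          rw [le_div_iff_of_neg hlt] at h6
          nlinarith [mul_nonneg hβ0 (neg_nonneg.mpr (le_of_lt hlt))]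
        · have h6 := hjamax k (Finset.mem_filter.mpr ⟨Finset.mem_univ k, hlt⟩)
          rw [div_le_iff₀ hlt] at h6
          nlinarith [mul_nonneg (neg_nonneg.mpr h) (le_of_lt hlt)]
      linarith
    have hβpos : 0 < β := lt_of_lt_of_le hα0 hαβ
    have hBja : B ja < 0 := by nlinarith [mul_pos hα0 hCja]
    have hBjb : 0 < B jb := by nlinarith [mul_neg_of_pos_of_neg hβpos hCjb]
    have hjajb : ja ≠ jb := fun h => by rw [h] at hCja; linarith
    have hadm : ∀ s : ℝ, α ≤ s → s ≤ β → ∀ i, 0 ≤ B i + s * C i := by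
      intro s hs1 hs2 i
      rcases (hC0 i).lt_or_gt with hlt | hlt
      · have h6 := hjbmin i (Finset.mem_filter.mpr ⟨Finset.mem_univ i, hlt⟩)
        rw [le_div_iff_of_neg hlt] at h6
        nlinarith [mul_le_mul_of_nonpos_right hs2 (le_of_lt hlt)]
      · have h6 := hjamax i (Finset.mem_filter.mpr ⟨Finset.mem_univ i, hlt⟩)
        rw [div_le_iff₀ hlt] at h6
        nlinarith [mul_le_mul_of_nonneg_right hs1 (le_of_lt hlt)]
    have hhitja : hit ja := ⟨α, hα0.le, by linarith, hadm α le_rfl hαβ⟩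
    have hhitjb : hit jb := ⟨β, hβpos.le, by linarith, hadm β hαβ le_rfl⟩
    have honly : ∀ j, hit j → j = ja ∨ j = jb := by
      intro j hj
      obtain ⟨t, ht0, htj, hall⟩ := hj
      obtain ⟨h1, h2⟩ := hbound t hall
      have ht0' : 0 < t := lt_of_lt_of_le hα0 h1
      have hBj : B j = -t * C j := by linarith
      have hBjne : B j ≠ 0 := by
        intro h
        rw [h] at hBj
        rcases (hC0 j).lt_or_gt with hlt | hlt <;> nlinarith
      rcases (hC0 j).lt_or_gt with hlt | hlt
      · have h6 := hjbmin j (Finset.mem_filter.mpr ⟨Finset.mem_univ j, hlt⟩)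
        have heq : t = -B j / C j := by rw [eq_div_iff (ne_of_lt hlt)]; linarith
        have htβ : t = β := le_antisymm h2 (heq ▸ h6)
        right
        by_contra hne'
        apply hgen j jb hne' (Or.inl hBjne)
        have e2 : B jb = -β * C jb := by linarith
        rw [hBj, e2, htβ]; ring
      · have h6 := hjamax j (Finset.mem_filter.mpr ⟨Finset.mem_univ j, hlt⟩)
        have heq : t = -B j / C j := by rw [eq_div_iff (ne_of_gt hlt)]; linarith
        have htα : t = α := le_antisymm (heq ▸ h6) h1
        left
        by_contra hne'
        apply hgen j ja hne' (Or.inl hBjne)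
        have e2 : B ja = -α * C ja := by linarith
        rw [hBj, e2, htα]; ring
    have hsub : ∑ j, Real.sign (B j) * (if hit j then (1:ℝ) else 0)
        = ∑ j ∈ ({ja, jb} : Finset (Fin n)), Real.sign (B j) * (if hit j then (1:ℝ) else 0) := by
      refine (Finset.sum_subset (Finset.subset_univ _) ?_).symm
      intro j _ hj
      rw [if_neg, mul_zero]
      intro h
      rcases honly j h with rfl | rfl
      · exact hj (Finset.mem_insert_self _ _)
      · exact hj (Finset.mem_insert_of_mem (Finset.mem_singleton_self _))
    rw [hsub, Finset.sum_pair hjajb, if_pos hhitja, if_pos hhitjb,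
      Real.sign_of_neg hBja, Real.sign_of_pos hBjb]
    ring
  · push_neg at hex
    apply Finset.sum_eq_zero
    intro j _
    rw [if_neg (hex j), mul_zero]

variable {d : ℕ}

lemma sector_subset (x : EuclideanSpace ℝ (Fin d)) (v : Fin (d + 1) → EuclideanSpace ℝ (Fin d))
    (j : Fin (d + 1)) : sector x v j ⊆ Metric.closedBall x 1 := fun p hp => hp.1

lemma sector_measurable (x : EuclideanSpace ℝ (Fin d))
    (v : Fin (d + 1) → EuclideanSpace ℝ (Fin d)) (j : Fin (d + 1)) :
    MeasurableSet (sector x v j) := by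
  have hK : IsCompact (convexHull ℝ (v '' {i | i ≠ j})) :=
    (Set.toFinite _).image v |>.isCompact_convexHull ℝ
  have hcont : Continuous (fun qt : EuclideanSpace ℝ (Fin d) × ℝ => x + qt.2 • (qt.1 - x)) := by
    fun_prop
  have hset : sector x v j = Metric.closedBall x 1 ∩
      ⋃ n : ℕ, (fun qt : EuclideanSpace ℝ (Fin d) × ℝ => x + qt.2 • (qt.1 - x)) ''
        ((convexHull ℝ (v '' {i | i ≠ j})) ×ˢ Set.Icc (0:ℝ) n) := by
    ext p
    constructor
    · rintro ⟨hball, q, hq, t, ht, rfl⟩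
      obtain ⟨n, hn⟩ := exists_nat_ge t
      exact ⟨hball, Set.mem_iUnion.mpr ⟨n, ⟨(q, t), ⟨hq, ht, hn⟩, rfl⟩⟩⟩
    · rintro ⟨hball, hcone⟩
      obtain ⟨n, ⟨q, t⟩, ⟨hq, ht, _⟩, rfl⟩ := Set.mem_iUnion.mp hcone
      exact ⟨hball, q, hq, t, ht, rfl⟩
  rw [hset]
  exact measurableSet_closedBall.inter (MeasurableSet.iUnion fun n =>
    ((hK.prod isCompact_Icc).image hcont).measurableSet)

lemma ball_translate (x : EuclideanSpace ℝ (Fin d)) :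
    volume (Metric.closedBall x 1) = volume (Metric.closedBall (0 : EuclideanSpace ℝ (Fin d)) 1) := by
  have h : Metric.closedBall x 1
      = (fun p : EuclideanSpace ℝ (Fin d) => -x + p) ⁻¹' (Metric.closedBall 0 1) := by
    ext p
    simp only [Set.mem_preimage, Metric.mem_closedBall, dist_eq_norm]
    rw [sub_zero, neg_add_eq_sub]
  rw [h, measure_preimage_add]

lemma null_linear_preimage (L : EuclideanSpace ℝ (Fin d) →ₗ[ℝ] ℝ) (hL : L ≠ 0)
    (x : EuclideanSpace ℝ (Fin d)) :
    volume {p : EuclideanSpace ℝ (Fin d) | L (p - x) = 0} = 0 := by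
  have h : {p : EuclideanSpace ℝ (Fin d) | L (p - x) = 0}
      = (fun p : EuclideanSpace ℝ (Fin d) => -x + p) ⁻¹' (LinearMap.ker L : Set _) := by
    ext p
    simp only [Set.mem_preimage, SetLike.mem_coe, LinearMap.mem_ker, Set.mem_setOf_eq,
      neg_add_eq_sub]
  rw [h, measure_preimage_add]
  exact Measure.addHaar_submodule _ _ (by simpa [LinearMap.ker_eq_top] using hL)

lemma real_sign_mul (a b : ℝ) : Real.sign (a * b) = Real.sign a * Real.sign b := by
  rcases lt_trichotomy a 0 with ha | rfl | ha <;> rcases lt_trichotomy b 0 with hb | rfl | hb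
  · rw [Real.sign_of_pos (mul_pos_of_neg_of_neg ha hb), Real.sign_of_neg ha,
      Real.sign_of_neg hb]; norm_num
  · simp
  · rw [Real.sign_of_neg (mul_neg_of_neg_of_pos ha hb), Real.sign_of_neg ha,
      Real.sign_of_pos hb]; norm_num
  · simp
  · simp
  · simp
  · rw [Real.sign_of_neg (mul_neg_of_pos_of_neg ha hb), Real.sign_of_pos ha,
      Real.sign_of_neg hb]; norm_num
  · simp
  · rw [Real.sign_of_pos (mul_pos ha hb), Real.sign_of_pos ha, Real.sign_of_pos hb]; norm_num

lemma sector_mem_iff (b : AffineBasis (Fin (d+1)) ℝ (EuclideanSpace ℝ (Fin d)))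
    (v : Fin (d + 1) → EuclideanSpace ℝ (Fin d)) (hbv : ⇑b = v)
    (x : EuclideanSpace ℝ (Fin d)) (j : Fin (d+1))
    (hxf : ¬(b.coord j x = 0 ∧ ∀ i, 0 ≤ b.coord i x))
    (p : EuclideanSpace ℝ (Fin d)) (hp : p ∈ Metric.closedBall x 1) (hpx : p ≠ x) :
    p ∈ sector x v j ↔ ∃ t : ℝ, 0 ≤ t ∧ b.coord j x + t * (b.coord j).linear (p - x) = 0 ∧
      ∀ i, 0 ≤ b.coord i x + t * (b.coord i).linear (p - x) := by
  have hfacet : ∀ q, q ∈ convexHull ℝ (v '' {i | i ≠ j})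
      ↔ (b.coord j q = 0 ∧ ∀ i, 0 ≤ b.coord i q) := by
    rw [← hbv]; exact facet_mem b j
  constructor
  · rintro ⟨_, q, hq, t, ht, hpq⟩
    have ht0 : t ≠ 0 := by
      intro h
      apply hpx
      rw [hpq, h, zero_smul, add_zero]
    have htpos : 0 < t := lt_of_le_of_ne ht (Ne.symm ht0)
    have hpsub : p - x = t • (q - x) := by rw [hpq]; abel
    have hqx : q = x + t⁻¹ • (p - x) := by
      rw [hpsub, smul_smul, inv_mul_cancel₀ ht0, one_smul]
      abel
    obtain ⟨hq0, hqall⟩ := (hfacet q).mp hq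
    rw [hqx] at hq0 hqall
    refine ⟨t⁻¹, inv_nonneg.mpr ht, ?_, ?_⟩
    · rw [← coord_line b j x (p-x) t⁻¹]; exact hq0
    · intro i
      rw [← coord_line b i x (p-x) t⁻¹]; exact hqall i
  · rintro ⟨t, ht, hj0, hall⟩
    have ht0 : t ≠ 0 := by
      intro h
      rw [h] at hj0 hall
      apply hxf
      constructor
      · simpa using hj0
      · intro i; simpa using hall i
    have htpos : 0 < t := lt_of_le_of_ne ht (Ne.symm ht0)
    refine ⟨hp, x + t • (p - x), ?_, t⁻¹, inv_nonneg.mpr ht, ?_⟩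
    · rw [hfacet]
      constructor
      · rw [coord_line]; exact hj0
      · intro i; rw [coord_line]; exact hall i
    · rw [add_sub_cancel_left, smul_smul, inv_mul_cancel₀ ht0, one_smul]
      abel


/-- solid-angle additivity: for a nondegenerate simplex `𝔖 = [v₁,…,v_{d+1}]`
with `v_{d+1} = 0`, the oriented volumes of the sectors `𝔅ⱼ(x)` sum to the (oriented) volume
of the unit ball when `x` is interior to `𝔖`, and to `0` when `x` is exterior to `𝔖`. -/
theorem stmt_13 (d : ℕ) (hd : 0 < d) (v : Fin (d + 1) → EuclideanSpace ℝ (Fin d))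
    (hv : AffineIndependent ℝ v) (hlast : v (Fin.last d) = 0)
    (x : EuclideanSpace ℝ (Fin d)) :
    (x ∈ interior (convexHull ℝ (Set.range v)) →
      ∑ j, sectorOrientedVol x v j
        = Real.sign (oVol v) *
            (volume (Metric.closedBall (0 : EuclideanSpace ℝ (Fin d)) 1)).toReal) ∧
    (x ∉ closure (convexHull ℝ (Set.range v)) →
      ∑ j, sectorOrientedVol x v j = 0) := by
  classical
  have hcard : Fintype.card (Fin (d+1)) = Module.finrank ℝ (EuclideanSpace ℝ (Fin d)) + 1 := by
    simp [finrank_euclideanSpace]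
  let b : AffineBasis (Fin (d+1)) ℝ (EuclideanSpace ℝ (Fin d)) :=
    ⟨v, hv, hv.affineSpan_eq_top_iff_card_eq_finrank_add_one.mpr hcard⟩
  have hbv : ⇑b = v := rfl
  set B : Fin (d+1) → ℝ := fun i => b.coord i x with hBdef
  set L : Fin (d+1) → (EuclideanSpace ℝ (Fin d) →ₗ[ℝ] ℝ) :=
    fun i => (b.coord i).linear with hLdef
  have hBsum : ∑ i, B i = 1 := b.sum_coord_apply_eq_one x
  have hrange : Set.range v = Set.range ⇑b := by rw [hbv]
  have hhullx : (x ∈ convexHull ℝ (Set.range v)) ↔ ∀ i, 0 ≤ B i := by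
    rw [hrange, b.convexHull_eq_nonneg_coord]; exact Iff.rfl
  have hintx : (x ∈ interior (convexHull ℝ (Set.range v))) ↔ ∀ i, 0 < B i := by
    rw [hrange, b.interior_convexHull]; exact Iff.rfl
  have hclosure : closure (convexHull ℝ (Set.range v)) = convexHull ℝ (Set.range v) :=
    ((Set.finite_range v).isCompact_convexHull ℝ).isClosed.closure_eq
  -- the common engine
  have main : ∀ c : ℝ,
      ((∀ i, 0 < B i) ∧ c = Real.sign (oVol v) ∨ (∃ k, B k < 0) ∧ c = 0) →
      ∑ j, sectorOrientedVol x v j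
        = c * (volume (Metric.closedBall x (1:ℝ))).toReal := by
    intro c hcase
    -- basic consequences of the position of x
    have hvx : ∀ i, v i ≠ x := by
      intro i hvi
      haveI : Nontrivial (Fin (d+1)) := by
        apply Fin.nontrivial_iff_two_le.mpr; omega
      have hco : ∀ m, B m = b.coord m (b i) := by
        intro m; rw [hBdef, ← hvi, hbv]
      rcases hcase with ⟨hpos, _⟩ | ⟨⟨k, hk⟩, _⟩
      · obtain ⟨m, hm⟩ := exists_ne i
        have := hpos m
        rw [hco m, b.coord_apply, if_neg hm] at this
        exact lt_irrefl 0 this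
      · have := hco k
        rw [b.coord_apply] at this
        split_ifs at this with h
        · rw [this] at hk; norm_num at hk
        · rw [this] at hk; norm_num at hk
    have hxf : ∀ j, ¬(b.coord j x = 0 ∧ ∀ i, 0 ≤ b.coord i x) := by
      intro j ⟨hj0, hall⟩
      rcases hcase with ⟨hpos, _⟩ | ⟨⟨k, hk⟩, _⟩
      · exact (hpos j).ne' hj0
      · exact absurd (hall k) (not_le.mpr hk)
    -- sign computation
    have hε : ∀ j, Real.sign (oVol (Function.update
          (fun i => x + ‖v i - x‖⁻¹ • (v i - x)) j x))
        = Real.sign (oVol v) * Real.sign (B j) := by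
      intro j
      obtain ⟨C0, hC0pos, hC0⟩ := oVol_norm_update v x j hvx
      have hupd : oVol (Function.update v j x) = B j * oVol v := by
        have h := oVol_update_basis b j x
        rw [hbv] at h
        exact h
      rw [hC0, hupd, real_sign_mul, real_sign_mul, Real.sign_of_pos hC0pos, one_mul, mul_comm]
    -- the null set of bad directions
    set N : Set (EuclideanSpace ℝ (Fin d)) :=
      (⋃ i, {p | L i (p - x) = 0}) ∪
      (⋃ i, ⋃ j, if (i ≠ j ∧ (B i ≠ 0 ∨ B j ≠ 0))
        then {p | (B i • L j - B j • L i) (p - x) = 0} else ∅) with hNdef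
    have hNnull : volume N = 0 := by
      rw [hNdef]
      apply measure_union_null
      · exact measure_iUnion_null fun i =>
          null_linear_preimage _ (coord_linear_ne_zero hd b i) x
      · refine measure_iUnion_null fun i => measure_iUnion_null fun j => ?_
        split_ifs with hcond
        · apply null_linear_preimage _ _ x
          apply pair_functional_ne_zero b hcond.1 hcond.2
          intro hall
          have h2 : ∑ m ∈ ({i, j} : Finset (Fin (d+1))), B m = ∑ m, B m := by
            apply Finset.sum_subset (Finset.subset_univ _)
            intro m _ hm
            exact absurd (hall m) (by
              rintro (rfl | rfl)
              · exact hm (Finset.mem_insert_self _ _)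
              · exact hm (Finset.mem_insert_of_mem (Finset.mem_singleton_self _)))
          rw [Finset.sum_pair hcond.1] at h2
          rw [h2, hBsum]
        · simp
    -- pointwise identity off N
    have hptwise : ∀ p, p ∉ N →
        (∑ j, (Real.sign (oVol v) * Real.sign (B j)) *
            Set.indicator (sector x v j) (fun _ => (1:ℝ)) p)
          = Set.indicator (Metric.closedBall x 1) (fun _ => c) p := by
      intro p hpN
      by_cases hpball : p ∈ Metric.closedBall x 1
      · have hpx : p ≠ x := by
          rintro rfl
          apply hpN
          left
          exact Set.mem_iUnion.mpr ⟨0, by simp⟩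
        set C : Fin (d+1) → ℝ := fun i => L i (p - x) with hCdef
        have hC0 : ∀ i, C i ≠ 0 := by
          intro i h
          exact hpN (Or.inl (Set.mem_iUnion.mpr ⟨i, h⟩))
        have hgen : ∀ i j, i ≠ j → (B i ≠ 0 ∨ B j ≠ 0) → B i * C j ≠ B j * C i := by
          intro i j hij hBij heq
          apply hpN
          right
          refine Set.mem_iUnion.mpr ⟨i, Set.mem_iUnion.mpr ⟨j, ?_⟩⟩
          rw [if_pos ⟨hij, hBij⟩]
          show (B i • L j - B j • L i) (p - x) = 0
          rw [LinearMap.sub_apply, LinearMap.smul_apply, LinearMap.smul_apply,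
            smul_eq_mul, smul_eq_mul]
          rw [hCdef] at heq
          simp only at heq
          linarith [heq]
        have hCsum : ∑ i, C i = 0 := by
          have hsub : ∀ i, C i = b.coord i p - b.coord i x := by
            intro i
            rw [hCdef, hLdef]
            exact coord_linear_sub b i p x
          rw [Finset.sum_congr rfl (fun i _ => hsub i), Finset.sum_sub_distrib,
            b.sum_coord_apply_eq_one, b.sum_coord_apply_eq_one, sub_self]
        have hind : ∀ j, Set.indicator (sector x v j) (fun _ => (1:ℝ)) p
            = if (∃ t : ℝ, 0 ≤ t ∧ B j + t * C j = 0 ∧ ∀ i, 0 ≤ B i + t * C i)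
              then (1:ℝ) else 0 := by
          intro j
          have hiff := sector_mem_iff b v hbv x j (hxf j) p hpball hpx
          by_cases hmem : p ∈ sector x v j
          · rw [Set.indicator_of_mem hmem, if_pos (hiff.mp hmem)]
          · rw [Set.indicator_of_notMem hmem, if_neg (fun h => hmem (hiff.mpr h))]
        have hfact : (∑ j, (Real.sign (oVol v) * Real.sign (B j)) *
              Set.indicator (sector x v j) (fun _ => (1:ℝ)) p)
            = Real.sign (oVol v) * ∑ j, Real.sign (B j) *
              (if (∃ t : ℝ, 0 ≤ t ∧ B j + t * C j = 0 ∧ ∀ i, 0 ≤ B i + t * C i)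
                then (1:ℝ) else 0) := by
          rw [Finset.mul_sum]
          refine Finset.sum_congr rfl fun j _ => ?_
          rw [hind j]; ring
        rw [hfact, Set.indicator_of_mem hpball]
        rcases hcase with ⟨hpos, hc⟩ | ⟨hneg, hc⟩
        · rw [core_interior (by omega) B C hBsum hCsum hC0 hgen hpos, hc, mul_one]
        · rw [core_exterior (by omega) B C hBsum hCsum hC0 hgen hneg, hc, mul_zero]
      · rw [Set.indicator_of_notMem hpball]
        apply Finset.sum_eq_zero
        intro j _
        rw [Set.indicator_of_notMem (fun h => hpball (sector_subset x v j h)), mul_zero]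
    -- integration
    have hfin : ∀ j, volume (sector x v j) < ⊤ := fun j =>
      lt_of_le_of_lt (measure_mono (sector_subset x v j)) measure_closedBall_lt_top
    have hInt : ∀ j : Fin (d+1), Integrable
        (fun p => (Real.sign (oVol v) * Real.sign (B j)) *
          Set.indicator (sector x v j) (fun _ => (1:ℝ)) p) volume := by
      intro j
      apply Integrable.const_mul
      rw [integrable_indicator_iff (sector_measurable x v j)]
      exact integrableOn_const (hfin j).ne
    have hsum_eq : ∑ j, sectorOrientedVol x v j
        = ∑ j, ∫ p, (Real.sign (oVol v) * Real.sign (B j)) *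
            Set.indicator (sector x v j) (fun _ => (1:ℝ)) p := by
      refine Finset.sum_congr rfl fun j _ => ?_
      rw [MeasureTheory.integral_const_mul,
        MeasureTheory.integral_indicator_const _ (sector_measurable x v j)]
      rw [sectorOrientedVol, hε j]
      simp [mul_comm, Measure.real]
    rw [hsum_eq, ← MeasureTheory.integral_finset_sum _ (fun j _ => hInt j)]
    have hae : (fun p => ∑ j, (Real.sign (oVol v) * Real.sign (B j)) *
          Set.indicator (sector x v j) (fun _ => (1:ℝ)) p)
        =ᵐ[volume] Set.indicator (Metric.closedBall x 1) (fun _ => c) := by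
      have h1 : ∀ᵐ p ∂(volume : Measure (EuclideanSpace ℝ (Fin d))), p ∉ N :=
        (MeasureTheory.measure_eq_zero_iff_ae_notMem).mp hNnull
      filter_upwards [h1] with p hp
      exact hptwise p hp
    rw [MeasureTheory.integral_congr_ae hae,
      MeasureTheory.integral_indicator_const _ measurableSet_closedBall]
    simp [mul_comm, Measure.real]
  constructor
  · intro hx
    rw [main (Real.sign (oVol v)) (Or.inl ⟨hintx.mp hx, rfl⟩), ball_translate]
  · intro hx
    rw [hclosure, hhullx] at hx
    push_neg at hx
    obtain ⟨k, hk⟩ := hx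
    rw [main 0 (Or.inr ⟨⟨k, hk⟩, rfl⟩), zero_mul]
end
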